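/- arXiv:1506.05593 — 5 statements merged into one kernel-verified Lean document; each statement's English description precedes it below -/
import Mathlib

section
/- Let Re(β) ∈ (-1,0), T(x) = |x|^β, and ψ a Schwartz function. Then for every x ≠ 0, T * ψ_{1/ε}(x) → 0 as ε → 0, where ψ_{1/ε}(x) = ε ψ(εx). In fact |T * ψ_{1/ε}(x)| ≤ C ε^{-Re(β)} for a constant C depending only on ψ. -/
open MeasureTheory Filter

/-- For `Re β ∈ (-1,0)`, `T x = |x|^β` and `ψ` Schwartz, with
`ψ_{1/ε} x = ε ψ (ε x)`: for every `x ≠ 0`, `|T * ψ_{1/ε}(x)| ≤ C ε^(-Re β)` with a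
constant depending only on `ψ`, and hence `T * ψ_{1/ε}(x) → 0` as `ε → 0⁺`. -/
theorem stmt6 (β : ℂ) (h1 : -1 < β.re) (h2 : β.re < 0) (ψ : SchwartzMap ℝ ℂ) :
    ∃ C > (0:ℝ), ∀ x : ℝ, x ≠ 0 →
      (∀ ε : ℝ, 0 < ε →
        ‖∫ y : ℝ, ((|y| : ℝ) : ℂ) ^ β * ((ε : ℂ) * ψ (ε * (x - y)))‖ ≤ C * ε ^ (-β.re)) ∧
      Tendsto (fun ε : ℝ => ∫ y : ℝ, ((|y| : ℝ) : ℂ) ^ β * ((ε : ℂ) * ψ (ε * (x - y))))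
        (nhdsWithin 0 (Set.Ioi 0)) (nhds 0) := by
  have hβ0 : β ≠ 0 := by
    intro h; rw [h] at h2; simp at h2
  have hr : β.re ≠ 0 := ne_of_lt h2
  -- norm of the cpow kernel
  have hnormg : ∀ u : ℝ, ‖((|u| : ℝ) : ℂ) ^ β‖ = |u| ^ β.re := by
    intro u
    rcases eq_or_ne u 0 with rfl | hu
    · simp [Complex.zero_cpow hβ0, Real.zero_rpow hr]
    · rw [Complex.norm_cpow_eq_rpow_re_of_pos (abs_pos.mpr hu)]
  -- measurability of the kernel
  have hmeas : Measurable fun u : ℝ => ((|u| : ℝ) : ℂ) ^ β := by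
    have heq : (fun u : ℝ => ((|u| : ℝ) : ℂ) ^ β)
        = fun u : ℝ => if u = 0 then 0 else Complex.exp (Complex.log ((|u| : ℝ) : ℂ) * β) := by
      funext u
      split_ifs with hu
      · simp [hu, Complex.zero_cpow hβ0]
      · exact Complex.cpow_def_of_ne_zero
          (Complex.ofReal_ne_zero.mpr (abs_ne_zero.mpr hu)) β
    rw [heq]
    exact Measurable.ite (measurableSet_eq) measurable_const
      (Complex.measurable_exp.comp ((Complex.measurable_log.comp
        (Complex.measurable_ofReal.comp measurable_abs)).mul_const β))
  -- global bound for ψ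
  obtain ⟨M, hMpos, hM⟩ := ψ.decay 0 0
  have hM' : ∀ t : ℝ, ‖ψ t‖ ≤ M := by
    intro t
    have := hM t
    simpa using this
  have hM0 : 0 ≤ M := hMpos.le
  -- integrability of |u|^β.re on [-1,1]
  have hIccInt : IntegrableOn (fun u : ℝ => |u| ^ β.re) (Set.Icc (-1 : ℝ) 1) := by
    have h01 : IntegrableOn (fun u : ℝ => |u| ^ β.re) (Set.Icc (0:ℝ) 1) := by
      rw [integrableOn_Icc_iff_integrableOn_Ioc]
      have h := intervalIntegral.intervalIntegrable_rpow' (a := 0) (b := 1) h1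
      rw [intervalIntegrable_iff, Set.uIoc_of_le zero_le_one] at h
      exact h.congr_fun (fun u hu => by rw [abs_of_pos hu.1]) measurableSet_Ioc
    have h10 : IntegrableOn (fun u : ℝ => |u| ^ β.re) (Set.Icc (-1:ℝ) 0) := by
      rw [integrableOn_Icc_iff_integrableOn_Ioc]
      have h := intervalIntegral.intervalIntegrable_rpow' (a := 0) (b := 1) h1
      rw [IntervalIntegrable.iff_comp_neg] at h
      rw [intervalIntegrable_iff] at h
      have huIoc : Set.uIoc (-0 : ℝ) (-1 : ℝ) = Set.Ioc (-1:ℝ) 0 := by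
        rw [Set.uIoc_comm]
        rw [Set.uIoc_of_le (by norm_num : (-1:ℝ) ≤ -0)]
        norm_num
      rw [huIoc] at h
      exact h.congr_fun (fun u hu => by rw [abs_of_nonpos hu.2]) measurableSet_Ioc
    have hsub : Set.Icc (-1:ℝ) 1 ⊆ Set.Icc (-1:ℝ) 0 ∪ Set.Icc 0 1 := by
      intro u hu
      rcases le_total u 0 with h | h
      · exact Or.inl ⟨hu.1, h⟩
      · exact Or.inr ⟨h, hu.2⟩
    exact (h10.union h01).mono_set hsub
  set A := ∫ u in Set.Icc (-1:ℝ) 1, |u| ^ β.re with hAdef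
  have hA0 : 0 ≤ A := setIntegral_nonneg measurableSet_Icc
    (fun u _ => Real.rpow_nonneg (abs_nonneg u) _)
  set I := ∫ u : ℝ, ‖ψ u‖ with hIdef
  have hI0 : 0 ≤ I := integral_nonneg fun u => norm_nonneg _
  -- key uniform estimate
  have key : ∀ z : ℝ, ‖∫ u : ℝ, ((|u| : ℝ) : ℂ) ^ β * ψ (z - u)‖ ≤ M * A + I := by
    intro z
    set g := fun u : ℝ => ((|u| : ℝ) : ℂ) ^ β * ψ (z - u) with hgdef
    have hgsm : AEStronglyMeasurable g volume :=
      (hmeas.mul (ψ.continuous.measurable.comp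
        (measurable_const.sub measurable_id))).aestronglyMeasurable
    have hgnorm : ∀ u, ‖g u‖ = |u| ^ β.re * ‖ψ (z - u)‖ := by
      intro u
      rw [hgdef]
      simp only
      rw [norm_mul, hnormg]
    have hψz : Integrable (fun u : ℝ => ψ (z - u)) := ψ.integrable.comp_sub_left z
    have hs : MeasurableSet (Set.Icc (-1:ℝ) 1) := measurableSet_Icc
    have hint1 : IntegrableOn g (Set.Icc (-1:ℝ) 1) := by
      refine (hIccInt.mul_const M).mono' hgsm.restrict ?_
      filter_upwards with u
      rw [hgnorm]
      exact mul_le_mul_of_nonneg_left (hM' _) (Real.rpow_nonneg (abs_nonneg u) _)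
    have hub : ∀ u ∈ (Set.Icc (-1:ℝ) 1)ᶜ, |u| ^ β.re * ‖ψ (z - u)‖ ≤ ‖ψ (z - u)‖ := by
      intro u hu
      have h1u : 1 ≤ |u| := by
        simp only [Set.mem_compl_iff, Set.mem_Icc, not_and_or, not_le] at hu
        rcases hu with h | h
        · rw [abs_of_neg (by linarith)]; linarith
        · rw [abs_of_pos (by linarith)]; linarith
      calc |u| ^ β.re * ‖ψ (z - u)‖ ≤ 1 * ‖ψ (z - u)‖ :=
            mul_le_mul_of_nonneg_right
              (Real.rpow_le_one_of_one_le_of_nonpos h1u h2.le) (norm_nonneg _)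
        _ = ‖ψ (z - u)‖ := one_mul _
    have hint2 : IntegrableOn g (Set.Icc (-1:ℝ) 1)ᶜ := by
      refine hψz.norm.integrableOn.mono' hgsm.restrict ?_
      filter_upwards [ae_restrict_mem hs.compl] with u hu
      rw [hgnorm]
      exact hub u hu
    have hgint : Integrable g := by
      rw [← integrableOn_univ, ← Set.union_compl_self (Set.Icc (-1:ℝ) 1)]
      exact hint1.union hint2
    calc ‖∫ u, g u‖ ≤ ∫ u, ‖g u‖ := norm_integral_le_integral_norm g
      _ = (∫ u in Set.Icc (-1:ℝ) 1, ‖g u‖) + ∫ u in (Set.Icc (-1:ℝ) 1)ᶜ, ‖g u‖ :=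
          (integral_add_compl hs hgint.norm).symm
      _ ≤ M * A + I := by
          refine add_le_add ?_ ?_
          · calc (∫ u in Set.Icc (-1:ℝ) 1, ‖g u‖)
                ≤ ∫ u in Set.Icc (-1:ℝ) 1, |u| ^ β.re * M :=
                setIntegral_mono_on hint1.norm (hIccInt.mul_const M) hs
                  (fun u _ => by
                    rw [hgnorm]
                    exact mul_le_mul_of_nonneg_left (hM' _)
                      (Real.rpow_nonneg (abs_nonneg u) _))
              _ = A * M := integral_mul_const M _
              _ = M * A := mul_comm _ _
          · calc (∫ u in (Set.Icc (-1:ℝ) 1)ᶜ, ‖g u‖)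
                ≤ ∫ u in (Set.Icc (-1:ℝ) 1)ᶜ, ‖ψ (z - u)‖ :=
                setIntegral_mono_on hint2.norm hψz.norm.integrableOn hs.compl
                  (fun u hu => by rw [hgnorm]; exact hub u hu)
              _ ≤ ∫ u : ℝ, ‖ψ (z - u)‖ :=
                setIntegral_le_integral hψz.norm
                  (Eventually.of_forall fun u => norm_nonneg _)
              _ = I := integral_sub_left_eq_self (fun u => ‖ψ u‖) volume z
  refine ⟨M * A + I + 1, by nlinarith [mul_nonneg hM0 hA0], ?_⟩
  intro x hx
  have main : ∀ ε : ℝ, 0 < ε →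
      ‖∫ y : ℝ, ((|y| : ℝ) : ℂ) ^ β * ((ε : ℂ) * ψ (ε * (x - y)))‖
        ≤ (M * A + I + 1) * ε ^ (-β.re) := by
    intro ε hε
    have hεC : (ε:ℂ) ≠ 0 := Complex.ofReal_ne_zero.mpr hε.ne'
    set g := fun u : ℝ => ((|u| : ℝ) : ℂ) ^ β * ψ (ε * x - u) with hgdef
    have hcan : (ε:ℂ) ^ (-β) * (ε:ℂ) ^ β = 1 := by
      rw [← Complex.cpow_add _ _ hεC, neg_add_cancel, Complex.cpow_zero]
    have heq : ∀ y : ℝ, ((|y| : ℝ) : ℂ) ^ β * ((ε : ℂ) * ψ (ε * (x - y)))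
        = ((ε:ℂ) ^ (-β) * ε) * g (ε * y) := by
      intro y
      have expand : g (ε * y) = (ε:ℂ)^β * (((|y| : ℝ) : ℂ)^β * ψ (ε * (x - y))) := by
        rw [hgdef]
        simp only
        have habs : ((|ε * y| : ℝ) : ℂ) ^ β = (ε:ℂ)^β * ((|y| : ℝ) : ℂ)^β := by
          rw [abs_mul, abs_of_pos hε, Complex.ofReal_mul]
          exact Complex.mul_cpow_ofReal_nonneg hε.le (abs_nonneg y) β
        have harg : ε * x - ε * y = ε * (x - y) := by ring
        rw [habs, harg]
        ring
      rw [expand,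
        show ((ε:ℂ) ^ (-β) * ↑ε) * ((ε:ℂ)^β * (((|y| : ℝ) : ℂ)^β * ψ (ε * (x - y))))
          = ((ε:ℂ) ^ (-β) * (ε:ℂ)^β) * (↑ε * (((|y| : ℝ) : ℂ)^β * ψ (ε * (x - y)))) from by ring,
        hcan, one_mul]
      ring
    have hint : (∫ y : ℝ, ((|y| : ℝ) : ℂ) ^ β * ((ε : ℂ) * ψ (ε * (x - y))))
        = (ε:ℂ) ^ (-β) * ∫ u : ℝ, g u := by
      simp_rw [heq]
      rw [integral_const_mul, Measure.integral_comp_mul_left g ε,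
        abs_of_pos (inv_pos.mpr hε), Complex.real_smul, Complex.ofReal_inv,
        show ((ε:ℂ) ^ (-β) * ↑ε) * ((↑ε)⁻¹ * ∫ u : ℝ, g u)
          = (ε:ℂ) ^ (-β) * ((↑ε * (↑ε)⁻¹) * ∫ u : ℝ, g u) from by ring,
        mul_inv_cancel₀ hεC, one_mul]
    rw [hint, norm_mul]
    have hnc : ‖(ε:ℂ) ^ (-β)‖ = ε ^ (-β.re) := by
      rw [Complex.norm_cpow_eq_rpow_re_of_pos hε, Complex.neg_re]
    rw [hnc]
    calc ε ^ (-β.re) * ‖∫ u : ℝ, g u‖ ≤ ε ^ (-β.re) * (M * A + I) :=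
          mul_le_mul_of_nonneg_left (key (ε * x)) (Real.rpow_nonneg hε.le _)
      _ ≤ (M * A + I + 1) * ε ^ (-β.re) := by
          rw [mul_comm]
          exact mul_le_mul_of_nonneg_right (by linarith) (Real.rpow_nonneg hε.le _)
  refine ⟨main, ?_⟩
  apply squeeze_zero_norm' (a := fun ε : ℝ => (M * A + I + 1) * ε ^ (-β.re))
  · filter_upwards [self_mem_nhdsWithin] with ε hε
    exact main ε hε
  · have h0 : ContinuousAt (fun t : ℝ => t ^ (-β.re)) 0 :=
      Real.continuousAt_rpow_const 0 _ (Or.inr (by linarith))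
    have := (h0.tendsto.mono_left (nhdsWithin_le_nhds (s := Set.Ioi (0:ℝ)))).const_mul (M * A + I + 1)
    simpa [Real.zero_rpow (show -β.re ≠ 0 by linarith)] using this
end

section
/- Let 0 < v < u be real numbers and define g_{u,v}(x) = u ln Γ(1+vx) − v ln Γ(1+ux) for x > 0. Then g_{u,v} is strictly decreasing on (0,∞), g_{u,v}(x) → 0 as x → 0⁺, and g_{u,v}(x) → −∞ as x → +∞. -/
open Filter

/-- For `0 < v < u`, the function
`g_{u,v} x = u ln Γ(1+vx) − v ln Γ(1+ux)` is strictly decreasing on `(0,∞)`,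
tends to `0` as `x → 0⁺` and to `−∞` as `x → +∞`. -/
theorem stmt9 (u v : ℝ) (hv : 0 < v) (huv : v < u)
    (g : ℝ → ℝ)
    (hg : g = fun x => u * Real.log (Real.Gamma (1 + v * x))
      - v * Real.log (Real.Gamma (1 + u * x))) :
    StrictAntiOn g (Set.Ioi 0) ∧
    Tendsto g (nhdsWithin 0 (Set.Ioi 0)) (nhds 0) ∧
    Tendsto g atTop atBot := by
  have hu : 0 < u := hv.trans huv
  set f : ℝ → ℝ := Real.log ∘ Real.Gamma with hfdef
  have hc : ConvexOn ℝ (Set.Ioi 0) f := Real.convexOn_log_Gamma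
  have hne : ∀ {x : ℝ}, 0 < x → ∀ m : ℕ, x ≠ -m := by
    intro x hx m h
    have : (0:ℝ) ≤ m := Nat.cast_nonneg m
    rw [h] at hx; linarith
  have hder : ∀ {x : ℝ}, 0 < x → DifferentiableAt ℝ f x := by
    intro x hx
    exact (Real.differentiableAt_Gamma (hne hx)).log (Real.Gamma_ne_zero (hne hx))
  have h_rec : ∀ x : ℝ, 0 < x → f (x + 1) = f x + Real.log x := by
    intro x hx
    simp only [hfdef, Function.comp_apply, Real.Gamma_add_one hx.ne',
      Real.log_mul hx.ne' (Real.Gamma_pos_of_pos hx).ne', add_comm]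
  -- monotonicity of deriv f
  have hφ_mono : ∀ {a b : ℝ}, 0 < a → a < b → deriv f a ≤ deriv f b := by
    intro a b ha hab
    have hb : (0:ℝ) < b := ha.trans hab
    exact (hc.deriv_le_slope ha hb hab (hder ha)).trans
      (hc.slope_le_deriv ha hb hab (hder hb))
  -- recurrence for deriv f
  have hder_rec : ∀ x : ℝ, 0 < x → deriv f (x + 1) = deriv f x + 1 / x := by
    intro x hx
    rw [← deriv_comp_add_const, one_div, ← Real.deriv_log,
      ← deriv_add (hder hx) (Real.differentiableAt_log hx.ne')]
    apply Filter.EventuallyEq.deriv_eq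
    filter_upwards [eventually_gt_nhds hx] using h_rec
  -- strict monotonicity of deriv f
  have hφ_strict : ∀ {a b : ℝ}, 0 < a → a < b → deriv f a < deriv f b := by
    intro a b ha hab
    rcases lt_or_eq_of_le (hφ_mono ha hab) with h | h
    · exact h
    · exfalso
      have hb : (0:ℝ) < b := ha.trans hab
      have h1 : deriv f (a + 1) = deriv f a + 1 / a := hder_rec a ha
      have h2 : deriv f (b + 1) = deriv f b + 1 / b := hder_rec b hb
      have h3 : deriv f (a + 1) ≤ deriv f (b + 1) :=
        hφ_mono (by linarith) (by linarith)
      have h4 : 1 / b < 1 / a := one_div_lt_one_div_of_lt ha hab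
      rw [h1, h2, ← h] at h3
      linarith
  -- derivative of g
  have hgd : ∀ x : ℝ, 0 < x →
      HasDerivAt g (u * (deriv f (1 + v * x) * v) - v * (deriv f (1 + u * x) * u)) x := by
    intro x hx
    have hvx : 0 < v * x := mul_pos hv hx
    have hux : 0 < u * x := mul_pos hu hx
    have hin : ∀ w : ℝ, HasDerivAt (fun y : ℝ => 1 + w * y) w x := by
      intro w
      simpa using ((hasDerivAt_id x).const_mul w).const_add 1
    have h1 : HasDerivAt (fun y : ℝ => f (1 + v * y)) (deriv f (1 + v * x) * v) x :=
      ((hder (by linarith : (0:ℝ) < 1 + v * x)).hasDerivAt).comp (h := fun y : ℝ => 1 + v * y) x (hin v)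
    have h2 : HasDerivAt (fun y : ℝ => f (1 + u * y)) (deriv f (1 + u * x) * u) x :=
      ((hder (by linarith : (0:ℝ) < 1 + u * x)).hasDerivAt).comp (h := fun y : ℝ => 1 + u * y) x (hin u)
    rw [hg]
    exact (h1.const_mul u).sub (h2.const_mul v)
  -- Part 1
  have part1 : StrictAntiOn g (Set.Ioi 0) := by
    apply strictAntiOn_of_deriv_neg (convex_Ioi 0)
    · intro x hx
      exact ((hgd x hx).differentiableAt).continuousAt.continuousWithinAt
    · intro x hx
      rw [interior_Ioi] at hx
      have hx0 : (0:ℝ) < x := hx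
      have hvx : 0 < v * x := mul_pos hv hx0
      rw [(hgd x hx).deriv]
      have h5 : deriv f (1 + v * x) < deriv f (1 + u * x) := by
        apply hφ_strict (by linarith)
        have : v * x < u * x := mul_lt_mul_of_pos_right huv hx0
        linarith
      nlinarith [mul_pos hu hv, mul_lt_mul_of_pos_left h5 (mul_pos hu hv)]
  -- Part 2
  have hg0 : g 0 = 0 := by rw [hg]; simp [Real.Gamma_one]
  have part2 : Tendsto g (nhdsWithin 0 (Set.Ioi 0)) (nhds 0) := by
    have base : ∀ w : ℝ, Tendsto (fun x : ℝ => Real.log (Real.Gamma (1 + w * x)))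
        (nhds 0) (nhds 0) := by
      intro w
      have hA : Tendsto (fun x : ℝ => 1 + w * x) (nhds 0) (nhds 1) := by
        have := (by fun_prop : Continuous fun x : ℝ => 1 + w * x).tendsto 0
        simpa using this
      have hB : Tendsto Real.Gamma (nhds 1) (nhds 1) := by
        have := (Real.differentiableAt_Gamma (hne one_pos)).continuousAt.tendsto
        simpa [Real.Gamma_one] using this
      have hC : Tendsto Real.log (nhds 1) (nhds 0) := by
        have := (Real.continuousAt_log one_ne_zero).tendsto
        simpa [Real.log_one] using this
      exact hC.comp (hB.comp hA)
    have h2 : Tendsto (fun x : ℝ => u * Real.log (Real.Gamma (1 + v * x))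
        - v * Real.log (Real.Gamma (1 + u * x))) (nhds 0) (nhds (u * 0 - v * 0)) :=
      ((base v).const_mul u).sub ((base u).const_mul v)
    rw [hg]
    simpa using h2.mono_left nhdsWithin_le_nhds
  -- Part 3
  refine ⟨part1, part2, ?_⟩
  set L : ℝ := u * v * Real.log ((u + v) / (2 * u)) with hL
  have hratio0 : (0:ℝ) < (u + v) / (2 * u) := by positivity
  have hratio1 : (u + v) / (2 * u) < 1 := by
    rw [div_lt_one (by positivity)]; linarith
  have hLneg : L < 0 := by
    have := Real.log_neg hratio0 hratio1
    have huv0 : 0 < u * v := by positivity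
    nlinarith
  set X : ℝ := max 1 (2 * (1 + v) / (u - v)) with hX
  have hX1 : (1:ℝ) ≤ X := le_max_left _ _
  have hX0 : (0:ℝ) < X := by linarith
  -- key increment bound
  have key : ∀ x : ℝ, X ≤ x → g (x + 1) ≤ g x + L := by
    intro x hxX
    have hx0 : (0:ℝ) < x := lt_of_lt_of_le hX0 hxX
    have hvx : 0 < v * x := mul_pos hv hx0
    have hux : 0 < u * x := mul_pos hu hx0
    -- upper bound on f (1 + v*x + v) - f (1 + v*x)
    have hA : f (1 + v * x + v) - f (1 + v * x) ≤ v * Real.log (1 + v * x + v) := by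
      have hs := hc.slope_mono_adjacent
        (show (1 + v * x : ℝ) ∈ Set.Ioi 0 by simp only [Set.mem_Ioi]; linarith)
        (show (1 + v * x + v + 1 : ℝ) ∈ Set.Ioi 0 by simp only [Set.mem_Ioi]; linarith)
        (show (1 + v * x : ℝ) < 1 + v * x + v by linarith)
        (show (1 + v * x + v : ℝ) < 1 + v * x + v + 1 by linarith)
      rw [h_rec (1 + v * x + v) (by linarith)] at hs
      have e1 : (1 + v * x + v) - (1 + v * x) = v := by ring
      have e2 : (1 + v * x + v + 1) - (1 + v * x + v) = 1 := by ring
      rw [e1, e2] at hs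
      simp only [add_sub_cancel_left, div_one] at hs
      have h6 := mul_le_mul_of_nonneg_left hs hv.le
      have h7 : v * ((f (1 + v * x + v) - f (1 + v * x)) / v)
          = f (1 + v * x + v) - f (1 + v * x) := by field_simp
      linarith
    -- lower bound on f (1 + u*x + u) - f (1 + u*x)
    have hB : u * Real.log (u * x) ≤ f (1 + u * x + u) - f (1 + u * x) := by
      have hs := hc.slope_mono_adjacent
        (show (u * x : ℝ) ∈ Set.Ioi 0 by simp only [Set.mem_Ioi]; linarith)
        (show (1 + u * x + u : ℝ) ∈ Set.Ioi 0 by simp only [Set.mem_Ioi]; linarith)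
        (show (u * x : ℝ) < u * x + 1 by linarith)
        (show (u * x + 1 : ℝ) < 1 + u * x + u by linarith)
      rw [h_rec (u * x) (by linarith)] at hs
      have e1 : (u * x + 1) - (u * x) = 1 := by ring
      have e2 : (1 + u * x + u) - (u * x + 1) = u := by ring
      rw [e1, e2] at hs
      simp only [add_sub_cancel_left, div_one] at hs
      have e4 : f (1 + u * x) = f (u * x) + Real.log (u * x) := by
        rw [show (1 + u * x : ℝ) = u * x + 1 by ring, h_rec (u * x) (by linarith)]
      have h6 := mul_le_mul_of_nonneg_left hs hu.le
      have h7 : u * ((f (1 + u * x + u) - (f (u * x) + Real.log (u * x))) / u)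
          = f (1 + u * x + u) - (f (u * x) + Real.log (u * x)) := by field_simp
      rw [e4]
      linarith
    -- log comparison
    have hlog : Real.log (1 + v * x + v) ≤ Real.log ((u + v) / (2 * u)) + Real.log (u * x) := by
      have hXr : 2 * (1 + v) / (u - v) ≤ x := le_trans (le_max_right _ _) hxX
      have huv' : (0:ℝ) < u - v := by linarith
      have hxb : 2 * (1 + v) ≤ (u - v) * x := by
        rw [div_le_iff₀ huv'] at hXr; linarith
      have harg : 1 + v * x + v ≤ ((u + v) / (2 * u)) * (u * x) := by
        have : ((u + v) / (2 * u)) * (u * x) = (u + v) * x / 2 := by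
          field_simp
        rw [this]; nlinarith
      calc Real.log (1 + v * x + v)
          ≤ Real.log (((u + v) / (2 * u)) * (u * x)) :=
            Real.log_le_log (by positivity) harg
        _ = Real.log ((u + v) / (2 * u)) + Real.log (u * x) :=
            Real.log_mul (by positivity) (by positivity)
    -- combine
    have expand : g (x + 1) - g x
        = u * (f (1 + v * x + v) - f (1 + v * x)) - v * (f (1 + u * x + u) - f (1 + u * x)) := by
      rw [hg]
      simp only [hfdef, Function.comp_apply]
      ring_nf
    have : g (x + 1) - g x ≤ L := by
      rw [expand, hL]
      have t1 : u * (f (1 + v * x + v) - f (1 + v * x)) ≤ u * (v * Real.log (1 + v * x + v)) :=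
        mul_le_mul_of_nonneg_left hA hu.le
      have t2 : v * (u * Real.log (u * x)) ≤ v * (f (1 + u * x + u) - f (1 + u * x)) :=
        mul_le_mul_of_nonneg_left hB hv.le
      have t3 : u * v * Real.log (1 + v * x + v)
          ≤ u * v * (Real.log ((u + v) / (2 * u)) + Real.log (u * x)) :=
        mul_le_mul_of_nonneg_left hlog (by positivity)
      nlinarith
    linarith
  -- iterate
  have hiter : ∀ n : ℕ, g (X + n) ≤ g X + n * L := by
    intro n
    induction n with
    | zero => simp
    | succ n ih =>
      have h1 : g (X + n + 1) ≤ g (X + n) + L := by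
        apply key
        have : (0:ℝ) ≤ n := Nat.cast_nonneg n
        linarith
      have e : X + (n + 1 : ℕ) = X + n + 1 := by push_cast; ring
      rw [e]
      push_cast
      linarith
  rw [tendsto_atBot]
  intro b
  obtain ⟨n, hn⟩ := exists_nat_ge ((g X - b) / (-L))
  have hnL : g X + n * L ≤ b := by
    rw [div_le_iff₀ (by linarith : (0:ℝ) < -L)] at hn
    nlinarith
  filter_upwards [eventually_ge_atTop (X + n)] with x hx
  have hXn : (0:ℝ) < X + n := by
    have : (0:ℝ) ≤ n := Nat.cast_nonneg n
    linarith
  have hgx : g x ≤ g (X + n) := by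
    rcases eq_or_lt_of_le hx with h | h
    · rw [h]
    · exact (part1 (Set.mem_Ioi.mpr hXn) (Set.mem_Ioi.mpr (hXn.trans h)) h).le
  linarith [hiter n]
end

section
/- Let 0 < v < u and h_{u,v}(x) = g_{u,v}(1/x) for x > 0, where g_{u,v}(x) = u ln Γ(1+vx) − v ln Γ(1+ux). Then h_{u,v} is a strictly increasing bijection from (0,∞) onto (−∞,0), with h_{u,v}(x) → 0 as x → +∞ and h_{u,v}(x) → −∞ as x → 0⁺; consequently it has a continuous differentiable inverse h_{u,v}^{-1} : (−∞,0) → (0,∞). -/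
open Filter Set

namespace Stmt10Aux

noncomputable def F : ℝ → ℝ := fun t => Real.log (Real.Gamma (1 + t))

lemma F_eq {t : ℝ} (ht : -1 < t) :
    F t = Real.log (Real.Gamma (t + 2)) - Real.log (1 + t) := by
  have h0 : (0:ℝ) < 1 + t := by linarith
  have hγ : 0 < Real.Gamma (1 + t) := Real.Gamma_pos_of_pos h0
  have hrec : Real.Gamma ((1 + t) + 1) = (1 + t) * Real.Gamma (1 + t) :=
    Real.Gamma_add_one (ne_of_gt h0)
  have : Real.log (Real.Gamma (t + 2)) = Real.log (1 + t) + Real.log (Real.Gamma (1 + t)) := by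
    rw [show t + 2 = (1 + t) + 1 by ring, hrec, Real.log_mul (ne_of_gt h0) (ne_of_gt hγ)]
  simp only [F]
  linarith

lemma F_strictConvexOn : StrictConvexOn ℝ (Set.Ioi (-1:ℝ)) F := by
  have c1 : ConvexOn ℝ (Set.Ioi (-1:ℝ)) (fun t => Real.log (Real.Gamma (t + 2))) := by
    refine ⟨convex_Ioi _, fun x hx y hy a b ha hb hab => ?_⟩
    have hx2 : x + 2 ∈ Set.Ioi (0:ℝ) := by simp only [Set.mem_Ioi] at *; linarith
    have hy2 : y + 2 ∈ Set.Ioi (0:ℝ) := by simp only [Set.mem_Ioi] at *; linarith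
    have := Real.convexOn_log_Gamma.2 hx2 hy2 ha hb hab
    simp only [Function.comp, smul_eq_mul] at this ⊢
    have harg : a * (x + 2) + b * (y + 2) = a * x + b * y + 2 := by nlinarith
    rwa [harg] at this
  have c2 : StrictConvexOn ℝ (Set.Ioi (-1:ℝ)) (fun t => -Real.log (1 + t)) := by
    refine ⟨convex_Ioi _, fun x hx y hy hxy a b ha hb hab => ?_⟩
    have hx1 : (1:ℝ) + x ∈ Set.Ioi (0:ℝ) := by simp only [Set.mem_Ioi] at *; linarith
    have hy1 : (1:ℝ) + y ∈ Set.Ioi (0:ℝ) := by simp only [Set.mem_Ioi] at *; linarith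
    have hne : (1:ℝ) + x ≠ 1 + y := by intro hc; exact hxy (by linarith)
    have := strictConcaveOn_log_Ioi.2 hx1 hy1 hne ha hb hab
    simp only [smul_eq_mul] at this ⊢
    have harg : a * (1 + x) + b * (1 + y) = 1 + (a * x + b * y) := by nlinarith
    rw [harg] at this
    linarith
  have SC := c1.add_strictConvexOn c2
  refine ⟨convex_Ioi _, fun x hx y hy hxy a b ha hb hab => ?_⟩
  have hmem : a • x + b • y ∈ Set.Ioi (-1:ℝ) := SC.1 hx hy ha.le hb.le hab
  have key := SC.2 hx hy hxy ha hb hab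
  simp only [smul_eq_mul] at hmem
  simp only [Pi.add_apply, smul_eq_mul] at key ⊢
  rw [F_eq (Set.mem_Ioi.1 hx), F_eq (Set.mem_Ioi.1 hy), F_eq (Set.mem_Ioi.1 hmem)]
  linarith

lemma F_diff {a : ℝ} (ha : -1 < a) : DifferentiableAt ℝ F a := by
  have h0 : (0:ℝ) < 1 + a := by linarith
  have hγ : 0 < Real.Gamma (1 + a) := Real.Gamma_pos_of_pos h0
  have hg : DifferentiableAt ℝ Real.Gamma (1 + a) :=
    Real.differentiableAt_Gamma (fun m => ne_of_gt (lt_of_le_of_lt (neg_nonpos.mpr (Nat.cast_nonneg m)) h0))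
  have hinner : DifferentiableAt ℝ (fun t : ℝ => 1 + t) a :=
    (differentiableAt_id.const_add 1)
  exact (Real.differentiableAt_log hγ.ne').comp a (hg.comp a hinner)

lemma F_zero : F 0 = 0 := by simp [F, Real.Gamma_one]

lemma F_nat (m : ℕ) : F m = Real.log ((m.factorial : ℕ) : ℝ) := by
  simp only [F, add_comm (1:ℝ) (m:ℝ), Real.Gamma_nat_eq_factorial]

lemma log_factorial_le (m : ℕ) :
    Real.log ((m.factorial : ℕ) : ℝ) ≤ (m + 1) * Real.log (m + 1) - m := by
  induction m with
  | zero => simp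
  | succ m ih =>
    have hpos : (0:ℝ) < (m:ℝ) + 1 := by positivity
    have hpos2 : (0:ℝ) < (m:ℝ) + 2 := by positivity
    have hfact : Real.log (((m+1).factorial : ℕ) : ℝ) = Real.log ((m:ℝ) + 1) + Real.log ((m.factorial : ℕ) : ℝ) := by
      rw [Nat.factorial_succ]
      push_cast
      rw [Real.log_mul (by positivity) (by exact_mod_cast Nat.cast_ne_zero.2 (Nat.factorial_ne_zero m))]
    have hlog : Real.log (((m:ℝ)+1)/((m:ℝ)+2)) ≤ ((m:ℝ)+1)/((m:ℝ)+2) - 1 :=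
      Real.log_le_sub_one_of_pos (by positivity)
    have hdiv : Real.log (((m:ℝ)+1)/((m:ℝ)+2)) = Real.log ((m:ℝ)+1) - Real.log ((m:ℝ)+2) :=
      Real.log_div (by positivity) (by positivity)
    have hkey : ((m:ℝ)+2) * Real.log ((m:ℝ)+2) ≥ ((m:ℝ)+2) * Real.log ((m:ℝ)+1) + 1 := by
      have h1 : Real.log ((m:ℝ)+1) - Real.log ((m:ℝ)+2) ≤ -(1/((m:ℝ)+2)) := by
        rw [← hdiv]
        have : ((m:ℝ)+1)/((m:ℝ)+2) - 1 = -(1/((m:ℝ)+2)) := by field_simp <;> norm_num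
        linarith
      have h2 : ((m:ℝ)+2) * (Real.log ((m:ℝ)+2) - Real.log ((m:ℝ)+1)) ≥ ((m:ℝ)+2) * (1/((m:ℝ)+2)) := by
        apply mul_le_mul_of_nonneg_left _ (le_of_lt hpos2)
        linarith
      have h3 : ((m:ℝ)+2) * (1/((m:ℝ)+2)) = 1 := by field_simp
      nlinarith
    push_cast
    push_cast at ih hfact
    have hr : (m:ℝ) + 1 + 1 = (m:ℝ) + 2 := by ring
    rw [hr]
    nlinarith

lemma G_eventually_le {u v : ℝ} (hv : 0 < v) (huv : v < u) :
    ∀ᶠ t in atTop, u * F (v*t) - v * F (u*t) ≤ -(v*(u-v)/2) * t := by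
  have hu : 0 < u := hv.trans huv
  have huv' : 0 < u - v := sub_pos.2 huv
  filter_upwards [eventually_ge_atTop ((70:ℝ)/v), eventually_ge_atTop (1/(u-v))] with t h1 h2
  have ht0 : 0 < t := lt_of_lt_of_le (by positivity) h1
  have hvt : (70:ℝ) ≤ v * t := by
    rw [div_le_iff₀ hv] at h1
    nlinarith
  have hut1 : v * t + 1 ≤ u * t := by
    rw [div_le_iff₀ huv'] at h2
    nlinarith
  set m := ⌊v*t⌋₊ with hmdef
  set M := (m:ℝ) with hMdef
  have hm_le : M ≤ v*t := Nat.floor_le (by positivity)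
  have hm_lt : v*t < M + 1 := Nat.lt_floor_add_one _
  have hM69 : (69:ℝ) ≤ M := by
    have : (69:ℕ) ≤ m := Nat.le_floor (by push_cast; linarith)
    rw [hMdef]; exact_mod_cast this
  have hden : (0:ℝ) < u*t - v*t := by linarith
  -- memberships
  have hmemM : M ∈ Set.Ioi (-1:ℝ) := by simp only [Set.mem_Ioi]; linarith
  have hmemM1 : M + 1 ∈ Set.Ioi (-1:ℝ) := by simp only [Set.mem_Ioi]; linarith
  have hmemvt : v*t ∈ Set.Ioi (-1:ℝ) := by simp only [Set.mem_Ioi]; linarith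
  have hmemut : u*t ∈ Set.Ioi (-1:ℝ) := by simp only [Set.mem_Ioi]; linarith
  have cv := F_strictConvexOn.convexOn
  have hswap : ∀ p q : ℝ, (F p - F q)/(p - q) = (F q - F p)/(q - p) := fun p q => by
    rw [← neg_div_neg_eq, neg_sub, neg_sub]
  have hFm : F M = Real.log ((m.factorial : ℕ) : ℝ) := F_nat m
  have hFm1 : F (M+1) = Real.log (((m+1).factorial : ℕ) : ℝ) := by
    have h := F_nat (m+1); push_cast at h ⊢; exact h
  have hslope_unit : F (M+1) - F M = Real.log (M+1) := by
    rw [hFm1, hFm, Nat.factorial_succ]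
    push_cast
    rw [Real.log_mul (by positivity) (Nat.cast_ne_zero.mpr (Nat.factorial_ne_zero m))]
    ring
  have hunit : (F (M+1) - F M)/((M+1) - M) = Real.log (M+1) := by
    rw [show (M+1) - M = 1 by ring, div_one, hslope_unit]
  set sl := (F (u*t) - F (v*t)) / (u*t - v*t) with hsl
  -- step A : log (M+1) ≤ sl
  have stepA : Real.log (M+1) ≤ sl := by
    have s1 := cv.secant_mono hmemM hmemM1 hmemut
      (by intro hc; linarith : M + 1 ≠ M) (by intro hc; linarith : u*t ≠ M)
      (by linarith : M + 1 ≤ u*t)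
    have s2 := cv.secant_mono hmemut hmemM hmemvt
      (by intro hc; linarith : M ≠ u*t) (by intro hc; linarith : v*t ≠ u*t)
      hm_le
    rw [hunit] at s1
    rw [hswap M (u*t), hswap (v*t) (u*t)] at s2
    calc Real.log (M+1) ≤ (F (u*t) - F M)/(u*t - M) := s1
      _ ≤ (F (u*t) - F (v*t))/(u*t - v*t) := s2
      _ = sl := rfl
  -- step B : F (v*t) ≤ log m! + (v*t - M) * log (M+1)
  have stepB : F (v*t) ≤ Real.log ((m.factorial : ℕ) : ℝ) + (v*t - M) * Real.log (M+1) := by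
    rcases eq_or_lt_of_le hm_le with heq | hlt
    · rw [← heq, hFm]; simp
    · have s3 := cv.secant_mono hmemM hmemvt hmemM1
        (ne_of_gt (by linarith) : v*t ≠ M) (by intro hc; linarith : M + 1 ≠ M)
        hm_lt.le
      rw [hunit] at s3
      have := (div_le_iff₀ (by linarith : (0:ℝ) < v*t - M)).1 s3
      rw [hFm] at *
      nlinarith
  have hlogfact := log_factorial_le m
  have hlognn : (0:ℝ) ≤ Real.log (M+1) := Real.log_nonneg (by linarith)
  have hFvt_le : F (v*t) ≤ (M+2) * Real.log (M+1) - M := by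
    have hh : (v*t - M) * Real.log (M+1) ≤ 1 * Real.log (M+1) :=
      mul_le_mul_of_nonneg_right (by linarith) hlognn
    rw [hMdef] at *
    push_cast at *
    nlinarith
  have hFut : F (u*t) = F (v*t) + (u*t - v*t) * sl := by
    rw [hsl]; field_simp; ring
  have hslmul : M * Real.log (M+1) ≤ v*t*sl := by
    have h1 : v*t*Real.log (M+1) ≤ v*t*sl :=
      mul_le_mul_of_nonneg_left stepA (by positivity)
    have h2 : M * Real.log (M+1) ≤ v*t*Real.log (M+1) :=
      mul_le_mul_of_nonneg_right hm_le hlognn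
    linarith
  -- sqrt bounds
  have hsqrt : Real.sqrt (M+1) ≤ (M+7)/8 := by
    rw [show (M+7)/8 = Real.sqrt (((M+7)/8)^2) from (Real.sqrt_sq (by positivity)).symm]
    exact Real.sqrt_le_sqrt (by nlinarith)
  have hlogle : Real.log (M+1) ≤ 2*Real.sqrt (M+1) - 2 := by
    have h1 : Real.log (Real.sqrt (M+1)) ≤ Real.sqrt (M+1) - 1 :=
      Real.log_le_sub_one_of_pos (Real.sqrt_pos.2 (by linarith))
    have h2 : Real.log (Real.sqrt (M+1)) = Real.log (M+1) / 2 := Real.log_sqrt (by linarith)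
    linarith
  have hcore : F (v*t) - v*t*sl ≤ -(v*t)/2 := by
    have : 2 * Real.log (M+1) - M ≤ -(v*t)/2 := by linarith
    linarith
  have hGid : u * F (v*t) - v * F (u*t) = (u-v) * (F (v*t) - v*t*sl) := by
    rw [hFut]; ring
  rw [hGid]
  calc (u-v) * (F (v*t) - v*t*sl) ≤ (u-v) * (-(v*t)/2) :=
        mul_le_mul_of_nonneg_left hcore huv'.le
    _ = -(v*(u-v)/2) * t := by ring


end Stmt10Aux

open Stmt10Aux

/-- For `0 < v < u` and `h_{u,v} x = g_{u,v}(1/x)` with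
`g_{u,v} x = u ln Γ(1+vx) − v ln Γ(1+ux)`, the function `h_{u,v}` is a strictly
increasing bijection from `(0,∞)` onto `(−∞,0)`, with `h → 0` at `+∞` and
`h → −∞` at `0⁺`; consequently it has an inverse `(−∞,0) → (0,∞)` which is
continuous and differentiable. -/
theorem stmt10 (u v : ℝ) (hv : 0 < v) (huv : v < u)
    (h : ℝ → ℝ)
    (hh : h = fun x => u * Real.log (Real.Gamma (1 + v * (1/x)))
      - v * Real.log (Real.Gamma (1 + u * (1/x)))) :
    StrictMonoOn h (Set.Ioi 0) ∧
    Set.BijOn h (Set.Ioi 0) (Set.Iio 0) ∧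
    Tendsto h atTop (nhds 0) ∧
    Tendsto h (nhdsWithin 0 (Set.Ioi 0)) atBot ∧
    ∃ hinv : ℝ → ℝ, Set.InvOn hinv h (Set.Ioi 0) (Set.Iio 0) ∧
      ContinuousOn hinv (Set.Iio 0) ∧
      ∀ y : ℝ, y < 0 → DifferentiableAt ℝ hinv y := by
  have hu : 0 < u := hv.trans huv
  have huv' : 0 < u - v := sub_pos.2 huv
  have hhG : h = fun x => u * F (v * (1/x)) - v * F (u * (1/x)) := hh
  clear hh
  subst hhG
  set G : ℝ → ℝ := fun t => u * F (v*t) - v * F (u*t) with hG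
  -- derivative package
  have hder : ∀ x : ℝ, 0 < x →
      ∃ d : ℝ, HasDerivAt (fun x => u * F (v * (1/x)) - v * F (u * (1/x))) d x ∧ 0 < d := by
    intro x hx
    have hx0 : x ≠ 0 := ne_of_gt hx
    have hxi : (0:ℝ) < 1/x := by positivity
    have hvtpos : (0:ℝ) < v * (1/x) := by positivity
    have hutpos : (0:ℝ) < u * (1/x) := by positivity
    have hmv : (-1:ℝ) < v * (1/x) := by linarith
    have hmu : (-1:ℝ) < u * (1/x) := by linarith
    have hiv : HasDerivAt (fun y : ℝ => v * (1/y)) (v * (-(x^2)⁻¹)) x := by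
      simpa [one_div] using (hasDerivAt_inv hx0).const_mul v
    have hiu : HasDerivAt (fun y : ℝ => u * (1/y)) (u * (-(x^2)⁻¹)) x := by
      simpa [one_div] using (hasDerivAt_inv hx0).const_mul u
    have Hv : HasDerivAt (fun y : ℝ => F (v * (1/y)))
        (deriv F (v*(1/x)) * (v * (-(x^2)⁻¹))) x := by
      simpa [Function.comp_def] using ((F_diff hmv).hasDerivAt.comp x hiv)
    have Hu : HasDerivAt (fun y : ℝ => F (u * (1/y)))
        (deriv F (u*(1/x)) * (u * (-(x^2)⁻¹))) x := by
      simpa [Function.comp_def] using ((F_diff hmu).hasDerivAt.comp x hiu)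
    refine ⟨u * (deriv F (v*(1/x)) * (v * (-(x^2)⁻¹)))
      - v * (deriv F (u*(1/x)) * (u * (-(x^2)⁻¹))), (Hv.const_mul u).sub (Hu.const_mul v), ?_⟩
    have hmono : deriv F (v*(1/x)) < deriv F (u*(1/x)) := by
      refine F_strictConvexOn.strictMonoOn_deriv (fun z hz => F_diff (Set.mem_Ioi.1 hz))
        (Set.mem_Ioi.2 hmv) (Set.mem_Ioi.2 hmu) ?_
      exact (mul_lt_mul_of_pos_right huv hxi)
    have hx2 : (0:ℝ) < (x^2)⁻¹ := by positivity
    nlinarith [mul_pos (mul_pos hu hv) (mul_pos hx2 (sub_pos.2 hmono))]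
  have hcont : ContinuousOn (fun x => u * F (v * (1/x)) - v * F (u * (1/x))) (Set.Ioi 0) :=
    fun x hx => ((hder x hx).choose_spec.1.continuousAt).continuousWithinAt
  have smono : StrictMonoOn (fun x => u * F (v * (1/x)) - v * F (u * (1/x))) (Set.Ioi 0) := by
    refine strictMonoOn_of_deriv_pos (convex_Ioi 0) hcont ?_
    intro x hx
    rw [interior_Ioi] at hx
    obtain ⟨d, hdd, hdp⟩ := hder x hx
    rw [hdd.deriv]; exact hdp
  -- negativity
  have hneg : ∀ x ∈ Set.Ioi (0:ℝ), (u * F (v * (1/x)) - v * F (u * (1/x))) < 0 := by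
    intro x hx
    rw [Set.mem_Ioi] at hx
    set t := 1/x with htdef
    have ht0 : (0:ℝ) < t := by positivity
    have hvt : (0:ℝ) < v * t := by positivity
    have hut : (0:ℝ) < u * t := by positivity
    have ss := F_strictConvexOn.secant_strict_mono (a := 0)
      (Set.mem_Ioi.2 (by norm_num)) (Set.mem_Ioi.2 (by linarith)) (Set.mem_Ioi.2 (by linarith))
      (ne_of_gt hvt) (ne_of_gt hut) (mul_lt_mul_of_pos_right huv ht0)
    rw [F_zero] at ss
    simp only [sub_zero] at ss
    have hd := (div_lt_div_iff₀ hvt hut).1 ss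
    nlinarith
  -- limit at atTop : h → 0
  have hGcont0 : Tendsto G (nhdsWithin 0 (Set.Ioi 0)) (nhds 0) := by
    have hF0 : ContinuousAt F 0 := (F_diff (by norm_num)).continuousAt
    have c1 : ContinuousAt (fun t : ℝ => F (v*t)) 0 :=
      ContinuousAt.comp (g := F) (by simpa using hF0) ((continuous_mul_left v).continuousAt)
    have c2 : ContinuousAt (fun t : ℝ => F (u*t)) 0 :=
      ContinuousAt.comp (g := F) (by simpa using hF0) ((continuous_mul_left u).continuousAt)
    have : ContinuousAt G 0 := ((c1.const_mul u).sub (c2.const_mul v))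
    have hval : G 0 = 0 := by simp [hG, F_zero]
    simpa [hval] using this.continuousWithinAt.tendsto
  have hinv_top : Tendsto (fun x : ℝ => 1/x) atTop (nhdsWithin 0 (Set.Ioi 0)) := by
    rw [tendsto_nhdsWithin_iff]
    constructor
    · simpa [one_div] using tendsto_inv_atTop_zero
    · filter_upwards [eventually_gt_atTop (0:ℝ)] with x hx
      exact Set.mem_Ioi.2 (by positivity)
  have htop : Tendsto (fun x => u * F (v * (1/x)) - v * F (u * (1/x))) atTop (nhds 0) :=
    hGcont0.comp hinv_top
  -- limit at 0+ : h → -∞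
  have hGbot : Tendsto G atTop atBot := by
    refine tendsto_atBot_mono' atTop (G_eventually_le hv huv) ?_
    have hc : -(v*(u-v)/2) < 0 := by nlinarith
    exact (tendsto_id (α := ℝ)).const_mul_atTop_of_neg hc
  have hbot : Tendsto (fun x => u * F (v * (1/x)) - v * F (u * (1/x)))
      (nhdsWithin 0 (Set.Ioi 0)) atBot := by
    refine hGbot.comp ?_
    exact tendsto_inv_nhdsGT_zero.congr (fun x => (one_div x).symm)
  -- surjectivity
  have hsurj : Set.SurjOn (fun x => u * F (v * (1/x)) - v * F (u * (1/x)))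
      (Set.Ioi 0) (Set.Iio 0) := by
    intro y hy
    rw [Set.mem_Iio] at hy
    obtain ⟨b, hyb, hb1⟩ :=
      ((htop.eventually (lt_mem_nhds hy)).and (eventually_ge_atTop (1:ℝ))).exists
    obtain ⟨a, hay, ha0⟩ :=
      ((hbot.eventually (eventually_lt_atBot y)).and self_mem_nhdsWithin).exists
    have ha0' : (0:ℝ) < a := Set.mem_Ioi.1 ha0
    have hb0 : b ∈ Set.Ioi (0:ℝ) := Set.mem_Ioi.2 (lt_of_lt_of_le one_pos hb1)
    have hab : a < b := by
      by_contra hc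
      push_neg at hc
      have := smono.monotoneOn hb0 ha0 hc
      linarith
    have hsub : Set.Icc a b ⊆ Set.Ioi 0 := fun z hz => Set.mem_Ioi.2 (lt_of_lt_of_le ha0' hz.1)
    have hIVT := intermediate_value_Icc hab.le (hcont.mono hsub)
    obtain ⟨x, hx, hxy⟩ := hIVT ⟨le_of_lt hay, le_of_lt hyb⟩
    exact ⟨x, hsub hx, hxy⟩
  have hmaps : Set.MapsTo (fun x => u * F (v * (1/x)) - v * F (u * (1/x)))
      (Set.Ioi 0) (Set.Iio 0) := fun x hx => Set.mem_Iio.2 (hneg x hx)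
  have hbij : Set.BijOn (fun x => u * F (v * (1/x)) - v * F (u * (1/x)))
      (Set.Ioi 0) (Set.Iio 0) := ⟨hmaps, smono.injOn, hsurj⟩
  refine ⟨smono, hbij, htop, hbot, ?_⟩
  set Hinv : ℝ → ℝ :=
    Function.invFunOn (fun x : ℝ => u * F (v * (1/x)) - v * F (u * (1/x))) (Set.Ioi (0:ℝ))
    with hHinv
  have hInvOn := hbij.invOn_invFunOn
  have hbij' : Set.BijOn Hinv (Set.Iio 0) (Set.Ioi 0) := Set.BijOn.symm hInvOn.symm hbij
  have hright : ∀ z ∈ Set.Iio (0:ℝ),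
      (fun x => u * F (v * (1/x)) - v * F (u * (1/x))) (Hinv z) = z := fun z hz => hInvOn.2 hz
  have hmono' : StrictMonoOn Hinv (Set.Iio 0) := by
    intro y1 h1 y2 h2 h12
    have hx1 := hbij'.mapsTo h1
    have hx2 := hbij'.mapsTo h2
    by_contra hc
    push_neg at hc
    have hmm := smono.monotoneOn hx2 hx1 hc
    have e1 := hright y1 h1
    have e2 := hright y2 h2
    simp only at hmm e1 e2
    rw [e1, e2] at hmm
    linarith
  have hca : ∀ y ∈ Set.Iio (0:ℝ), ContinuousAt Hinv y := by
    intro y hy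
    refine hmono'.continuousAt_of_image_mem_nhds (isOpen_Iio.mem_nhds hy) ?_
    rw [hbij'.image_eq]
    exact isOpen_Ioi.mem_nhds (hbij'.mapsTo hy)
  refine ⟨Hinv, hInvOn, fun y hy => (hca y hy).continuousWithinAt, ?_⟩
  intro y hy
  have hy' : y ∈ Set.Iio 0 := Set.mem_Iio.2 hy
  obtain ⟨d, hdd, hdp⟩ := hder (Hinv y) (Set.mem_Ioi.1 (hbij'.mapsTo hy'))
  have hev : ∀ᶠ z in nhds y, (fun x => u * F (v * (1/x)) - v * F (u * (1/x))) (Hinv z) = z :=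
    Filter.eventually_of_mem (isOpen_Iio.mem_nhds hy') (fun z hz => hright z hz)
  exact (HasDerivAt.of_local_left_inverse (hca y hy') hdd hdp.ne' hev).differentiableAt
end

section
/- Let (U,V) be a centered bivariate Gaussian vector with unit variances and correlation ρ, |ρ| < 1, and let β ∈ ℂ with Re(β) ∈ (−1/2, 0). Then there is a constant C (independent of ρ) such that |cov(|U|^β, |V|^{β̄})| ≤ C ρ² for all |ρ| ≤ 1/2. -/
open MeasureTheory

open Real Set

set_option maxHeartbeats 1000000


lemma norm_cpow_abs (β : ℂ) (hre : β.re ≠ 0) (x : ℝ) :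
    ‖((|x| : ℝ) : ℂ) ^ β‖ = |x| ^ β.re := by
  rcases eq_or_ne x 0 with h | h
  · have hβ : β ≠ 0 := fun hb => hre (by simp [hb])
    simp [h, Complex.zero_cpow hβ, Real.zero_rpow hre]
  · rw [Complex.norm_cpow_eq_rpow_re_of_pos (by positivity)]

lemma sinh_le_mul_exp {v : ℝ} (hv : 0 ≤ v) : Real.sinh v ≤ v * Real.exp v := by
  rw [Real.sinh_eq]
  have h := Real.add_one_le_exp (-(2*v))
  have h2 : Real.exp (-v) = Real.exp v * Real.exp (-(2*v)) := by
    rw [← Real.exp_add]; ring_nf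
  nlinarith [Real.exp_pos v, Real.exp_pos (-(2*v))]

lemma cosh_sub_one_le (u : ℝ) : Real.cosh u - 1 ≤ u^2/2 * Real.exp |u| := by
  have h1 : Real.cosh u = 2 * Real.sinh (u/2)^2 + 1 := by
    have hc := Real.cosh_sq (u/2)
    have h2 := Real.cosh_two_mul (u/2)
    rw [show 2*(u/2) = u by ring] at h2
    nlinarith
  have h3 : |Real.sinh (u/2)| ≤ |u/2| * Real.exp |u/2| := by
    rw [Real.abs_sinh]
    exact sinh_le_mul_exp (abs_nonneg _)
  have h4 : Real.exp |u/2| * Real.exp |u/2| = Real.exp |u| := by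
    rw [← Real.exp_add]
    congr 1
    rw [abs_div]
    norm_num
  have h5 : Real.sinh (u/2)^2 = |Real.sinh (u/2)|^2 := (sq_abs _).symm
  have h6 : (u/2)^2 = |u/2|^2 := (sq_abs _).symm
  nlinarith [abs_nonneg (u/2), Real.exp_pos |u/2|, abs_nonneg (Real.sinh (u/2)),
    mul_le_mul h3 h3 (abs_nonneg _) (by positivity)]


lemma integrable_abs_rpow_exp {a c : ℝ} (ha : -1 < a) (hc : 0 < c) :
    Integrable fun x : ℝ => |x| ^ a * Real.exp (-c * x ^ 2) := by
  have key : IntegrableOn (fun x : ℝ => |x| ^ a * Real.exp (-c * x ^ 2)) (Ioi 0) := by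
    refine (integrableOn_rpow_mul_exp_neg_mul_sq hc ha).congr_fun ?_ measurableSet_Ioi
    intro x hx
    simp only []
    rw [abs_of_pos hx]
  rw [← integrableOn_univ, ← @Iio_union_Ici _ _ (0 : ℝ), integrableOn_union,
    integrableOn_Ici_iff_integrableOn_Ioi]
  refine ⟨?_, key⟩
  rw [← (Measure.measurePreserving_neg (volume : Measure ℝ)).integrableOn_comp_preimage
      (Homeomorph.neg ℝ).measurableEmbedding]
  simpa only [Function.comp_def, neg_sq, abs_neg, neg_preimage, neg_Iio, neg_neg,
    neg_zero] using key

lemma abs_rpow_sq (a : ℝ) (ha : a ≠ 0) (ha2 : a + 2 ≠ 0) (x : ℝ) :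
    |x| ^ a * x ^ 2 = |x| ^ (a + 2) := by
  rcases eq_or_ne x 0 with h | h
  · simp [h, Real.zero_rpow ha, Real.zero_rpow ha2]
  · rw [Real.rpow_add (abs_pos.2 h), Real.rpow_two, sq_abs]


lemma key_bound (ρ x y : ℝ) (hρ : |ρ| ≤ 1/2) :
    |((2 * Real.pi * Real.sqrt (1 - ρ ^ 2))⁻¹ *
        Real.exp (-(x ^ 2 + y ^ 2 - 2 * ρ * x * y) / (2 * (1 - ρ ^ 2))) +
      (2 * Real.pi * Real.sqrt (1 - ρ ^ 2))⁻¹ *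
        Real.exp (-(x ^ 2 + y ^ 2 + 2 * ρ * x * y) / (2 * (1 - ρ ^ 2)))) / 2 -
      (2 * Real.pi)⁻¹ * Real.exp (-(x ^ 2 + y ^ 2) / 2)|
    ≤ ρ ^ 2 * ((2 * Real.pi)⁻¹ * Real.exp (-(x ^ 2 + y ^ 2) / 2) *
        (2 * x ^ 2 * y ^ 2 * Real.exp ((x ^ 2 + y ^ 2) / 3) + 1 + x ^ 2 + y ^ 2)) := by
  have hρ' := abs_le.mp hρ
  have hρ2 : ρ ^ 2 ≤ 1/4 := by nlinarith [sq_abs ρ, abs_nonneg ρ]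
  set t : ℝ := 1 - ρ ^ 2 with ht_def
  have ht34 : 3/4 ≤ t := by simp only [ht_def]; linarith
  have ht1 : t ≤ 1 := by simp only [ht_def]; nlinarith [sq_nonneg ρ]
  have ht0 : 0 < t := by linarith
  set s : ℝ := x ^ 2 + y ^ 2 with hs_def
  have hs0 : 0 ≤ s := by positivity
  set u1 : ℝ := ρ * x * y / t with hu1_def
  set u2 : ℝ := ρ ^ 2 * s / (2 * t) with hu2_def
  set w : ℝ := (Real.sqrt t)⁻¹ with hw_def
  have hsq : Real.sqrt t ^ 2 = t := Real.sq_sqrt ht0.le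
  have hsqpos : 0 < Real.sqrt t := Real.sqrt_pos.2 ht0
  have hw0 : 0 < w := by positivity
  -- bounds on w
  have hwt : w * Real.sqrt t = 1 := inv_mul_cancel₀ hsqpos.ne'
  have hst1 : Real.sqrt t ≤ 1 := Real.sqrt_le_one.mpr ht1
  have hw1 : 1 ≤ w := by nlinarith
  have hw2 : w ≤ 1 + ρ ^ 2 := by
    have h1 : 1 ≤ (1 + ρ ^ 2) * Real.sqrt t := by
      nlinarith [hsq, hsqpos, sq_nonneg ρ, sq_nonneg (ρ^2), sq_nonneg (Real.sqrt t - 1),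
        sq_nonneg ((1 + ρ^2) * Real.sqrt t - 1), sq_nonneg ((1+ρ^2)*Real.sqrt t + 1)]
    calc w = w * 1 := (mul_one w).symm
    _ ≤ w * ((1 + ρ ^ 2) * Real.sqrt t) := mul_le_mul_of_nonneg_left h1 hw0.le
    _ = 1 + ρ ^ 2 := by rw [mul_comm ((1:ℝ)+ρ^2), ← mul_assoc, hwt, one_mul]
  have hw54 : w ≤ 5/4 := by linarith
  -- bounds on u2
  have hu2a : 0 ≤ u2 := by positivity
  have hu2b : u2 ≤ (2/3) * (ρ ^ 2 * s) := by
    rw [hu2_def, div_le_iff₀ (by linarith : (0:ℝ) < 2 * t)]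
    nlinarith [mul_nonneg (mul_nonneg (sq_nonneg ρ) hs0) (by linarith : (0:ℝ) ≤ t - 3/4)]
  -- bounds on u1
  have hxy1 : x * y ≤ s / 2 := by nlinarith [sq_nonneg (x - y)]
  have hxy2 : -(s / 2) ≤ x * y := by nlinarith [sq_nonneg (x + y)]
  have hpxy1 : ρ * x * y ≤ s / 4 := by
    nlinarith [mul_nonneg (by linarith : (0:ℝ) ≤ 1/2 - ρ) (by linarith : (0:ℝ) ≤ s/2 + x*y),
      mul_nonneg (by linarith : (0:ℝ) ≤ 1/2 + ρ) (by linarith : (0:ℝ) ≤ s/2 - x*y)]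
  have hpxy2 : -(s / 4) ≤ ρ * x * y := by
    nlinarith [mul_nonneg (by linarith : (0:ℝ) ≤ 1/2 - ρ) (by linarith : (0:ℝ) ≤ s/2 - x*y),
      mul_nonneg (by linarith : (0:ℝ) ≤ 1/2 + ρ) (by linarith : (0:ℝ) ≤ s/2 + x*y)]
  have hst4 : s / 4 ≤ s / 3 * t := by
    nlinarith [mul_nonneg hs0 (by linarith : (0:ℝ) ≤ t - 3/4)]
  have hu1abs : |u1| ≤ s / 3 := by
    rw [abs_le]
    constructor
    · rw [hu1_def, le_div_iff₀ ht0]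
      linarith
    · rw [hu1_def, div_le_iff₀ ht0]
      linarith
  have hu1sq : u1 ^ 2 ≤ 2 * (ρ ^ 2 * (x ^ 2 * y ^ 2)) := by
    have h : u1 * t = ρ * x * y := by rw [hu1_def]; field_simp
    have h2 : (u1 * t) ^ 2 = (ρ * x * y) ^ 2 := by rw [h]
    have h3 : (0:ℝ) ≤ 2 * t ^ 2 - 1 := by nlinarith
    nlinarith [mul_nonneg (sq_nonneg u1) h3, h2]
  -- exponential splitting identities
  have hsplit1 : Real.exp (-(x ^ 2 + y ^ 2 - 2 * ρ * x * y) / (2 * t))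
      = Real.exp (-s/2) * Real.exp (-u2) * Real.exp u1 := by
    rw [← Real.exp_add, ← Real.exp_add]
    congr 1
    simp only [hu1_def, hu2_def, hs_def, ht_def]
    have hne : (1:ℝ) - ρ ^ 2 ≠ 0 := by nlinarith
    field_simp
    ring
  have hsplit2 : Real.exp (-(x ^ 2 + y ^ 2 + 2 * ρ * x * y) / (2 * t))
      = Real.exp (-s/2) * Real.exp (-u2) * Real.exp (-u1) := by
    rw [← Real.exp_add, ← Real.exp_add]
    congr 1
    simp only [hu1_def, hu2_def, hs_def, ht_def]
    have hne : (1:ℝ) - ρ ^ 2 ≠ 0 := by nlinarith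
    field_simp
    ring
  have hcoef : (2 * Real.pi * Real.sqrt t)⁻¹ = (2 * Real.pi)⁻¹ * w := by
    rw [hw_def, mul_inv]
  set c : ℝ := (Real.exp u1 + Real.exp (-u1)) / 2 with hc_def
  have hcosh : c = Real.cosh u1 := (Real.cosh_eq u1).symm
  have hc1 : 1 ≤ c := by rw [hcosh]; exact Real.one_le_cosh u1
  have hexp3 : (0:ℝ) < Real.exp (s/3) := Real.exp_pos _
  have hcsub : c - 1 ≤ u1^2/2 * Real.exp (s/3) := by
    have h := cosh_sub_one_le u1
    have h2 : Real.exp |u1| ≤ Real.exp (s/3) := Real.exp_le_exp.mpr hu1abs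
    rw [hcosh] at hc1 ⊢
    nlinarith [sq_nonneg u1]
  have e0 : (0:ℝ) < Real.exp (-u2) := Real.exp_pos _
  have heu2a : Real.exp (-u2) ≤ 1 := by
    calc Real.exp (-u2) ≤ Real.exp 0 := Real.exp_le_exp.mpr (by linarith)
    _ = 1 := Real.exp_zero
  have heu2b : 1 - u2 ≤ Real.exp (-u2) := by
    have := Real.add_one_le_exp (-u2); linarith
  have hE : |w * Real.exp (-u2) * c - 1|
      ≤ ρ^2 * (2 * x^2 * y^2 * Real.exp (s/3) + 1 + s) := by
    have hA0 : (0:ℝ) ≤ ρ^2 * (x^2*y^2) * Real.exp (s/3) := by positivity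
    have hrs : (0:ℝ) ≤ ρ^2 * s := by positivity
    rw [abs_le]
    have hexpand : ρ^2 * (2 * x^2 * y^2 * Real.exp (s/3) + 1 + s)
        = 2 * (ρ^2 * (x^2*y^2) * Real.exp (s/3)) + ρ^2 + ρ^2 * s := by ring
    constructor
    · -- lower bound
      have hwc : (1:ℝ) ≤ w * c := by
        simpa using mul_le_mul hw1 hc1 zero_le_one (by linarith : (0:ℝ) ≤ w)
      have h1 : Real.exp (-u2) ≤ w * Real.exp (-u2) * c := by
        have h2 := mul_le_mul_of_nonneg_left hwc e0.le
        linarith [h2]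
      linarith [h1, heu2b, hu2b, hA0, hrs, sq_nonneg ρ]
    · -- upper bound
      have hwle := mul_le_mul_of_nonneg_left heu2a hw0.le
      rw [mul_one] at hwle
      have hwe : w * Real.exp (-u2) ≤ 5/4 := by linarith
      have hwe1 : w * Real.exp (-u2) - 1 ≤ ρ^2 := by linarith
      have hc0 : (0:ℝ) ≤ c - 1 := by linarith
      have ht1' : (w * Real.exp (-u2)) * (c-1) ≤ (5/4) * (c-1) :=
        mul_le_mul_of_nonneg_right hwe hc0
      have hhalf : u1^2/2 ≤ ρ^2 * (x^2*y^2) := by linarith [hu1sq]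
      have ht2 := mul_le_mul_of_nonneg_right hhalf hexp3.le
      linarith [ht1', hcsub, ht2, hwe1, hA0, hrs]
  have hmain : ((2 * Real.pi * Real.sqrt t)⁻¹ * Real.exp (-(x ^ 2 + y ^ 2 - 2 * ρ * x * y) / (2 * t))
        + (2 * Real.pi * Real.sqrt t)⁻¹ * Real.exp (-(x ^ 2 + y ^ 2 + 2 * ρ * x * y) / (2 * t))) / 2
        - (2 * Real.pi)⁻¹ * Real.exp (-s / 2)
      = (2 * Real.pi)⁻¹ * Real.exp (-s/2) * (w * Real.exp (-u2) * c - 1) := by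
    rw [hsplit1, hsplit2, hcoef, hc_def]
    ring
  rw [hmain, abs_mul, abs_of_nonneg (by positivity : (0:ℝ) ≤ (2 * Real.pi)⁻¹ * Real.exp (-s/2))]
  calc (2 * Real.pi)⁻¹ * Real.exp (-s/2) * |w * Real.exp (-u2) * c - 1|
      ≤ (2 * Real.pi)⁻¹ * Real.exp (-s/2) * (ρ^2 * (2 * x^2 * y^2 * Real.exp (s/3) + 1 + s)) :=
        mul_le_mul_of_nonneg_left hE (by positivity)
    _ = ρ ^ 2 * ((2 * Real.pi)⁻¹ * Real.exp (-s/2) * (2 * x^2 * y^2 * Real.exp (s/3) + 1 + s)) := by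
        ring
    _ = ρ ^ 2 * ((2 * Real.pi)⁻¹ * Real.exp (-s/2) *
          (2 * x^2 * y^2 * Real.exp (s/3) + 1 + x ^ 2 + y ^ 2)) := by
        simp only [hs_def]; ring

lemma density_le (ρ x y : ℝ) (hρ : |ρ| ≤ 1/2) :
    (2 * Real.pi * Real.sqrt (1 - ρ ^ 2))⁻¹ *
      Real.exp (-(x ^ 2 + y ^ 2 - 2 * ρ * x * y) / (2 * (1 - ρ ^ 2)))
    ≤ Real.exp (-(1/6) * x ^ 2) * Real.exp (-(1/6) * y ^ 2) := by
  have hρ' := abs_le.mp hρ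
  have hρ2 : ρ ^ 2 ≤ 1/4 := by nlinarith [sq_abs ρ, abs_nonneg ρ]
  have ht34 : (3/4 : ℝ) ≤ 1 - ρ ^ 2 := by linarith
  have ht1 : (1 : ℝ) - ρ ^ 2 ≤ 1 := by nlinarith [sq_nonneg ρ]
  have ht0 : (0:ℝ) < 1 - ρ ^ 2 := by linarith
  have hsq : (1/2 : ℝ) ≤ Real.sqrt (1 - ρ ^ 2) := by
    rw [show (1/2 : ℝ) = Real.sqrt (1/4) by
      rw [show (1/4:ℝ) = (1/2)^2 by norm_num, Real.sqrt_sq]; norm_num]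
    exact Real.sqrt_le_sqrt (by linarith)
  have hπ := Real.pi_gt_three
  have hcoef : (2 * Real.pi * Real.sqrt (1 - ρ ^ 2))⁻¹ ≤ 1 := by
    rw [inv_le_one_iff₀]
    right
    nlinarith
  set s : ℝ := x ^ 2 + y ^ 2 with hs_def
  have hs0 : (0:ℝ) ≤ s := by positivity
  have hxy1 : x * y ≤ s / 2 := by nlinarith [sq_nonneg (x - y)]
  have hxy2 : -(s / 2) ≤ x * y := by nlinarith [sq_nonneg (x + y)]
  have hpxy1 : ρ * x * y ≤ s / 4 := by
    nlinarith [mul_nonneg (by linarith : (0:ℝ) ≤ 1/2 - ρ) (by linarith : (0:ℝ) ≤ s/2 + x*y),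
      mul_nonneg (by linarith : (0:ℝ) ≤ 1/2 + ρ) (by linarith : (0:ℝ) ≤ s/2 - x*y)]
  have hexp : Real.exp (-(x ^ 2 + y ^ 2 - 2 * ρ * x * y) / (2 * (1 - ρ ^ 2)))
      ≤ Real.exp (-(1/6) * x ^ 2) * Real.exp (-(1/6) * y ^ 2) := by
    rw [← Real.exp_add]
    apply Real.exp_le_exp.mpr
    rw [div_le_iff₀ (by linarith : (0:ℝ) < 2 * (1 - ρ ^ 2))]
    nlinarith [mul_nonneg hs0 (by linarith : (0:ℝ) ≤ 1 - (1 - ρ^2))]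
  calc (2 * Real.pi * Real.sqrt (1 - ρ ^ 2))⁻¹ *
        Real.exp (-(x ^ 2 + y ^ 2 - 2 * ρ * x * y) / (2 * (1 - ρ ^ 2)))
      ≤ 1 * (Real.exp (-(1/6) * x ^ 2) * Real.exp (-(1/6) * y ^ 2)) := by
        apply mul_le_mul hcoef hexp (Real.exp_pos _).le zero_le_one
    _ = Real.exp (-(1/6) * x ^ 2) * Real.exp (-(1/6) * y ^ 2) := one_mul _

/-- Let `(U,V)` be a centered bivariate Gaussian vector with unit
variances and correlation `ρ`, `|ρ| ≤ 1/2`, expressed through its joint density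
`f_ρ (x,y) = (2π√(1−ρ²))⁻¹ exp(−(x²+y²−2ρxy)/(2(1−ρ²)))`, and let `β : ℂ` with
`Re β ∈ (−1/2, 0)`.  Then there is a constant `C` independent of `ρ` such that
`|cov(|U|^β, |V|^β̄)| ≤ C ρ²` for all `|ρ| ≤ 1/2`, where
`cov(|U|^β,|V|^β̄) = E(|U|^β |V|^β̄) − E|U|^β ⬝ E|V|^β̄` and the marginals have
standard normal density `φ`. -/
theorem stmt12 (β : ℂ) (h1 : -(1/2 : ℝ) < β.re) (h2 : β.re < 0) :
    ∃ C > (0:ℝ), ∀ ρ : ℝ, |ρ| ≤ 1/2 →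
      ‖(∫ p : ℝ × ℝ,
            ((|p.1| : ℝ) : ℂ) ^ β * ((|p.2| : ℝ) : ℂ) ^ (starRingEnd ℂ β) *
              (((2 * Real.pi * Real.sqrt (1 - ρ ^ 2))⁻¹ *
                Real.exp (-(p.1 ^ 2 + p.2 ^ 2 - 2 * ρ * p.1 * p.2) /
                  (2 * (1 - ρ ^ 2))) : ℝ) : ℂ))
        - (∫ x : ℝ, ((|x| : ℝ) : ℂ) ^ β *
              (((Real.sqrt (2 * Real.pi))⁻¹ * Real.exp (-x ^ 2 / 2) : ℝ) : ℂ)) *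
          (∫ y : ℝ, ((|y| : ℝ) : ℂ) ^ (starRingEnd ℂ β) *
              (((Real.sqrt (2 * Real.pi))⁻¹ * Real.exp (-y ^ 2 / 2) : ℝ) : ℂ))‖
        ≤ C * ρ ^ 2 := by
  have hre : β.re ≠ 0 := ne_of_lt h2
  have hre' : (starRingEnd ℂ β).re = β.re := Complex.conj_re β
  set a : ℝ := β.re with ha_def
  have ha1 : (-1:ℝ) < a := by simp only [ha_def]; linarith
  have ha2 : (-1:ℝ) < a + 2 := by linarith
  have hane : a ≠ 0 := hre
  have ha2ne : a + 2 ≠ 0 := by linarith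
  -- 1D integrable building blocks
  have Ig2 : Integrable fun x : ℝ => |x| ^ a * Real.exp (-(1/2) * x ^ 2) :=
    integrable_abs_rpow_exp ha1 (by norm_num)
  have Ig1 : Integrable fun x : ℝ => |x| ^ (a+2) * Real.exp (-(1/6) * x ^ 2) :=
    integrable_abs_rpow_exp ha2 (by norm_num)
  have Ig3 : Integrable fun x : ℝ => |x| ^ (a+2) * Real.exp (-(1/2) * x ^ 2) :=
    integrable_abs_rpow_exp ha2 (by norm_num)
  have Ig6 : Integrable fun x : ℝ => |x| ^ a * Real.exp (-(1/6) * x ^ 2) :=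
    integrable_abs_rpow_exp ha1 (by norm_num)
  -- dominating function
  set g : ℝ × ℝ → ℝ := fun p => (2 * Real.pi)⁻¹ *
      (2 * ((|p.1| ^ (a+2) * Real.exp (-(1/6) * p.1 ^ 2)) *
            (|p.2| ^ (a+2) * Real.exp (-(1/6) * p.2 ^ 2)))
        + (|p.1| ^ a * Real.exp (-(1/2) * p.1 ^ 2)) * (|p.2| ^ a * Real.exp (-(1/2) * p.2 ^ 2))
        + (|p.1| ^ (a+2) * Real.exp (-(1/2) * p.1 ^ 2)) * (|p.2| ^ a * Real.exp (-(1/2) * p.2 ^ 2))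
        + (|p.1| ^ a * Real.exp (-(1/2) * p.1 ^ 2)) *
            (|p.2| ^ (a+2) * Real.exp (-(1/2) * p.2 ^ 2))) with hg_def
  have hgInt : Integrable g := by
    rw [hg_def, Measure.volume_eq_prod ℝ ℝ]
    exact ((((Ig1.mul_prod Ig1).const_mul 2).add (Ig2.mul_prod Ig2)).add
      ((Ig3.mul_prod Ig2))).add ((Ig2.mul_prod Ig3)) |>.const_mul _
  have hgpos : ∀ p : ℝ × ℝ, 0 ≤ g p := by
    intro p
    rw [hg_def]
    have := Real.rpow_nonneg (abs_nonneg p.1) a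
    positivity
  -- the M dominating function for individual integrands
  set M : ℝ × ℝ → ℝ := fun p => (|p.1| ^ a * Real.exp (-(1/6) * p.1 ^ 2)) *
      (|p.2| ^ a * Real.exp (-(1/6) * p.2 ^ 2)) with hM_def
  have hMInt : Integrable M := by
    rw [hM_def, Measure.volume_eq_prod ℝ ℝ]
    exact Ig6.mul_prod Ig6
  -- H and its properties
  set H : ℝ × ℝ → ℂ := fun p =>
    ((|p.1| : ℝ) : ℂ) ^ β * ((|p.2| : ℝ) : ℂ) ^ (starRingEnd ℂ β) with hH_def
  have measH : Measurable H := by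
    rw [hH_def]
    exact ((Complex.measurable_ofReal.comp
        (continuous_abs.measurable.comp measurable_fst)).pow measurable_const).mul
      ((Complex.measurable_ofReal.comp
        (continuous_abs.measurable.comp measurable_snd)).pow measurable_const)
  have hHnorm : ∀ p : ℝ × ℝ, ‖H p‖ = |p.1| ^ a * |p.2| ^ a := by
    intro p
    rw [hH_def]
    simp only [norm_mul]
    rw [norm_cpow_abs β hre, norm_cpow_abs (starRingEnd ℂ β) (by rw [hre']; exact hre), hre']
  refine ⟨(∫ p : ℝ × ℝ, g p) + 1, by positivity, ?_⟩
  intro ρ hρ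
  set f1 : ℝ × ℝ → ℝ := fun p => (2 * Real.pi * Real.sqrt (1 - ρ ^ 2))⁻¹ *
      Real.exp (-(p.1 ^ 2 + p.2 ^ 2 - 2 * ρ * p.1 * p.2) / (2 * (1 - ρ ^ 2))) with hf1_def
  set f2 : ℝ × ℝ → ℝ := fun p => (2 * Real.pi * Real.sqrt (1 - ρ ^ 2))⁻¹ *
      Real.exp (-(p.1 ^ 2 + p.2 ^ 2 + 2 * ρ * p.1 * p.2) / (2 * (1 - ρ ^ 2))) with hf2_def
  set q : ℝ × ℝ → ℝ := fun p => (2 * Real.pi)⁻¹ *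
      Real.exp (-(p.1 ^ 2 + p.2 ^ 2) / 2) with hq_def
  have hρ2 : ρ ^ 2 ≤ 1/4 := by
    have := abs_le.mp hρ
    nlinarith [sq_abs ρ, abs_nonneg ρ]
  have hρt0 : (0:ℝ) < 1 - ρ ^ 2 := by linarith
  -- pointwise bounds by the exponential envelope
  have hf1le : ∀ p : ℝ × ℝ, f1 p ≤ Real.exp (-(1/6) * p.1 ^ 2) * Real.exp (-(1/6) * p.2 ^ 2) :=
    fun p => density_le ρ p.1 p.2 hρ
  have hf2le : ∀ p : ℝ × ℝ, f2 p ≤ Real.exp (-(1/6) * p.1 ^ 2) * Real.exp (-(1/6) * p.2 ^ 2) := by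
    intro p
    have h := density_le ρ p.1 (-p.2) hρ
    rw [hf2_def]
    simp only [neg_sq, mul_neg] at h ⊢
    convert h using 4 <;> ring
  have hqle : ∀ p : ℝ × ℝ, q p ≤ Real.exp (-(1/6) * p.1 ^ 2) * Real.exp (-(1/6) * p.2 ^ 2) := by
    intro p
    rw [hq_def, ← Real.exp_add]
    have hc : (2 * Real.pi)⁻¹ ≤ 1 := by
      rw [inv_le_one_iff₀]; right; nlinarith [Real.pi_gt_three]
    calc (2 * Real.pi)⁻¹ * Real.exp (-(p.1 ^ 2 + p.2 ^ 2) / 2)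
        ≤ 1 * Real.exp (-(1/6) * p.1 ^ 2 + -(1/6) * p.2 ^ 2) := by
          apply mul_le_mul hc (Real.exp_le_exp.mpr (by nlinarith [sq_nonneg p.1, sq_nonneg p.2]))
            (Real.exp_pos _).le zero_le_one
      _ = _ := one_mul _
  have hf1pos : ∀ p : ℝ × ℝ, 0 ≤ f1 p := by
    intro p; rw [hf1_def]; positivity
  have hf2pos : ∀ p : ℝ × ℝ, 0 ≤ f2 p := by
    intro p; rw [hf2_def]; positivity
  have hqpos : ∀ p : ℝ × ℝ, 0 ≤ q p := by
    intro p; rw [hq_def]; positivity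
  -- integrability of the three products
  have hInt : ∀ (f : ℝ × ℝ → ℝ), Measurable f → (∀ p, 0 ≤ f p) →
      (∀ p, f p ≤ Real.exp (-(1/6) * p.1 ^ 2) * Real.exp (-(1/6) * p.2 ^ 2)) →
      Integrable fun p => H p * (f p : ℂ) := by
    intro f measf hfpos hfle
    refine hMInt.mono' ((measH.mul (Complex.measurable_ofReal.comp measf)).aestronglyMeasurable)
      (Filter.Eventually.of_forall fun p => ?_)
    rw [norm_mul, hHnorm p, Complex.norm_real, Real.norm_eq_abs, abs_of_nonneg (hfpos p), hM_def]
    have h1 : |p.1| ^ a * |p.2| ^ a * f p ≤ |p.1| ^ a * |p.2| ^ a *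
        (Real.exp (-(1/6) * p.1 ^ 2) * Real.exp (-(1/6) * p.2 ^ 2)) := by
      apply mul_le_mul_of_nonneg_left (hfle p)
      have := Real.rpow_nonneg (abs_nonneg p.1) a
      have := Real.rpow_nonneg (abs_nonneg p.2) a
      positivity
    calc |p.1| ^ a * |p.2| ^ a * f p
        ≤ |p.1| ^ a * |p.2| ^ a *
          (Real.exp (-(1/6) * p.1 ^ 2) * Real.exp (-(1/6) * p.2 ^ 2)) := h1
      _ = |p.1| ^ a * Real.exp (-(1/6) * p.1 ^ 2) * (|p.2| ^ a * Real.exp (-(1/6) * p.2 ^ 2)) := by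
          ring
  have measf1 : Measurable f1 := by
    rw [hf1_def]
    fun_prop
  have measf2 : Measurable f2 := by
    rw [hf2_def]
    fun_prop
  have measq : Measurable q := by
    rw [hq_def]
    fun_prop
  have hIf1 := hInt f1 measf1 hf1pos hf1le
  have hIf2 := hInt f2 measf2 hf2pos hf2le
  have hIq := hInt q measq hqpos hqle
  -- symmetry in the second variable
  have mp : MeasurePreserving (fun p : ℝ × ℝ => (p.1, -p.2)) volume volume := by
    rw [Measure.volume_eq_prod ℝ ℝ]
    exact (MeasurePreserving.id volume).prod (Measure.measurePreserving_neg volume)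
  have emb : MeasurableEmbedding (fun p : ℝ × ℝ => (p.1, -p.2)) :=
    ((Homeomorph.refl ℝ).prodCongr (Homeomorph.neg ℝ)).measurableEmbedding
  have hfswap : ∀ p : ℝ × ℝ, f2 (p.1, -p.2) = f1 p := by
    intro p
    rw [hf1_def, hf2_def]
    simp only
    ring_nf
  have hHswap : ∀ p : ℝ × ℝ, H (p.1, -p.2) = H p := by
    intro p
    rw [hH_def]
    simp only [abs_neg]
  have hsym : (∫ p : ℝ × ℝ, H p * (f1 p : ℂ)) = ∫ p : ℝ × ℝ, H p * (f2 p : ℂ) := by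
    have h := mp.integral_comp emb (fun p : ℝ × ℝ => H p * (f2 p : ℂ))
    rw [← h]
    congr 1
    funext p
    show H p * (f1 p : ℂ) = H (p.1, -p.2) * (f2 (p.1, -p.2) : ℂ)
    rw [hHswap p, hfswap p]
  -- averaging
  have havg : (∫ p : ℝ × ℝ, H p * (f1 p : ℂ))
      = ∫ p : ℝ × ℝ, H p * (((f1 p + f2 p) / 2 : ℝ) : ℂ) := by
    have hadd := integral_add hIf1 hIf2
    have h2 : (∫ p : ℝ × ℝ, H p * (((f1 p + f2 p) / 2 : ℝ) : ℂ))
        = (1/2 : ℂ) * ∫ p : ℝ × ℝ, (H p * (f1 p : ℂ) + H p * (f2 p : ℂ)) := by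
      rw [← integral_const_mul]
      congr 1
      funext p
      push_cast
      ring
    rw [h2, hadd, ← hsym]
    ring
  -- product side factorization
  have hφmul : ∀ x y : ℝ, ((Real.sqrt (2 * Real.pi))⁻¹ * Real.exp (-x ^ 2 / 2)) *
      ((Real.sqrt (2 * Real.pi))⁻¹ * Real.exp (-y ^ 2 / 2))
      = (2 * Real.pi)⁻¹ * Real.exp (-(x ^ 2 + y ^ 2) / 2) := by
    intro x y
    rw [show ((Real.sqrt (2 * Real.pi))⁻¹ * Real.exp (-x ^ 2 / 2)) *
        ((Real.sqrt (2 * Real.pi))⁻¹ * Real.exp (-y ^ 2 / 2))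
        = ((Real.sqrt (2 * Real.pi))⁻¹ * (Real.sqrt (2 * Real.pi))⁻¹) *
          (Real.exp (-x ^ 2 / 2) * Real.exp (-y ^ 2 / 2)) from by ring,
      ← mul_inv, Real.mul_self_sqrt (by positivity), ← Real.exp_add]
    congr 1
    ring
  have hP : (∫ x : ℝ, ((|x| : ℝ) : ℂ) ^ β *
        (((Real.sqrt (2 * Real.pi))⁻¹ * Real.exp (-x ^ 2 / 2) : ℝ) : ℂ)) *
      (∫ y : ℝ, ((|y| : ℝ) : ℂ) ^ (starRingEnd ℂ β) *
        (((Real.sqrt (2 * Real.pi))⁻¹ * Real.exp (-y ^ 2 / 2) : ℝ) : ℂ))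
      = ∫ p : ℝ × ℝ, H p * (q p : ℂ) := by
    rw [← MeasureTheory.integral_prod_mul, ← Measure.volume_eq_prod]
    congr 1
    funext p
    show _ = H p * (q p : ℂ)
    rw [hH_def, hq_def]
    simp only
    rw [show (((2 * Real.pi)⁻¹ * Real.exp (-(p.1 ^ 2 + p.2 ^ 2) / 2) : ℝ) : ℂ)
        = (((((Real.sqrt (2 * Real.pi))⁻¹ * Real.exp (-p.1 ^ 2 / 2)) *
            ((Real.sqrt (2 * Real.pi))⁻¹ * Real.exp (-p.2 ^ 2 / 2))) : ℝ) : ℂ) from by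
          rw [hφmul p.1 p.2]]
    push_cast
    ring
  -- the difference as a single integral
  have hAvgInt : Integrable fun p : ℝ × ℝ => H p * (((f1 p + f2 p) / 2 : ℝ) : ℂ) := by
    have h := (hIf1.add hIf2).const_mul (1/2 : ℂ)
    refine h.congr (Filter.Eventually.of_forall fun p => ?_)
    simp only [Pi.add_apply]
    push_cast
    ring
  have e1 : (∫ p : ℝ × ℝ,
        ((|p.1| : ℝ) : ℂ) ^ β * ((|p.2| : ℝ) : ℂ) ^ (starRingEnd ℂ β) *
          (((2 * Real.pi * Real.sqrt (1 - ρ ^ 2))⁻¹ *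
            Real.exp (-(p.1 ^ 2 + p.2 ^ 2 - 2 * ρ * p.1 * p.2) /
              (2 * (1 - ρ ^ 2))) : ℝ) : ℂ))
      = ∫ p : ℝ × ℝ, H p * (f1 p : ℂ) := rfl
  rw [e1, havg, hP, ← integral_sub hAvgInt hIq]
  have e2 : (∫ p : ℝ × ℝ, (H p * (((f1 p + f2 p) / 2 : ℝ) : ℂ) - H p * (q p : ℂ)))
      = ∫ p : ℝ × ℝ, H p * (((f1 p + f2 p) / 2 - q p : ℝ) : ℂ) := by
    congr 1
    funext p
    push_cast
    ring
  rw [e2]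
  -- pointwise identity between the bound and g
  have hgeq : ∀ p : ℝ × ℝ, |p.1| ^ a * |p.2| ^ a *
      ((2 * Real.pi)⁻¹ * Real.exp (-(p.1 ^ 2 + p.2 ^ 2) / 2) *
        (2 * p.1 ^ 2 * p.2 ^ 2 * Real.exp ((p.1 ^ 2 + p.2 ^ 2) / 3) + 1 + p.1 ^ 2 + p.2 ^ 2))
      = g p := by
    intro p
    rw [hg_def]
    simp only
    rw [show |p.1| ^ (a + 2) = |p.1| ^ a * p.1 ^ 2 from (abs_rpow_sq a hane ha2ne p.1).symm,
      show |p.2| ^ (a + 2) = |p.2| ^ a * p.2 ^ 2 from (abs_rpow_sq a hane ha2ne p.2).symm]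
    set P : ℝ := Real.exp (-(1/6) * p.1 ^ 2) with hPdef
    set Q : ℝ := Real.exp (-(1/6) * p.2 ^ 2) with hQdef
    have hP0 : P ≠ 0 := Real.exp_ne_zero _
    have hQ0 : Q ≠ 0 := Real.exp_ne_zero _
    have h12x : Real.exp (-(1/2) * p.1 ^ 2) = P ^ 3 := by
      rw [hPdef, ← Real.exp_nat_mul]
      congr 1
      push_cast
      ring
    have h12y : Real.exp (-(1/2) * p.2 ^ 2) = Q ^ 3 := by
      rw [hQdef, ← Real.exp_nat_mul]
      congr 1
      push_cast
      ring
    have hs2 : Real.exp (-(p.1 ^ 2 + p.2 ^ 2) / 2) = P ^ 3 * Q ^ 3 := by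
      rw [hPdef, hQdef, ← Real.exp_nat_mul, ← Real.exp_nat_mul, ← Real.exp_add]
      congr 1
      push_cast
      ring
    have hs3 : Real.exp ((p.1 ^ 2 + p.2 ^ 2) / 3) * (P ^ 2 * Q ^ 2) = 1 := by
      rw [hPdef, hQdef, ← Real.exp_nat_mul, ← Real.exp_nat_mul, ← Real.exp_add, ← Real.exp_add]
      rw [show (p.1 ^ 2 + p.2 ^ 2) / 3 + ((2:ℕ) * (-(1/6) * p.1 ^ 2) + (2:ℕ) * (-(1/6) * p.2 ^ 2))
          = 0 from by push_cast; ring]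
      exact Real.exp_zero
    have hR : Real.exp ((p.1 ^ 2 + p.2 ^ 2) / 3) = (P ^ 2 * Q ^ 2)⁻¹ :=
      eq_inv_of_mul_eq_one_left hs3
    rw [hs2, hR, h12x, h12y]
    field_simp
  -- final estimate
  have hfinal : ‖∫ p : ℝ × ℝ, H p * (((f1 p + f2 p) / 2 - q p : ℝ) : ℂ)‖
      ≤ ∫ p : ℝ × ℝ, ρ ^ 2 * g p := by
    refine norm_integral_le_of_norm_le (hgInt.const_mul _)
      (Filter.Eventually.of_forall fun p => ?_)
    rw [norm_mul, hHnorm p, Complex.norm_real, Real.norm_eq_abs]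
    have hkey : |(f1 p + f2 p) / 2 - q p| ≤ ρ ^ 2 *
        ((2 * Real.pi)⁻¹ * Real.exp (-(p.1 ^ 2 + p.2 ^ 2) / 2) *
          (2 * p.1 ^ 2 * p.2 ^ 2 * Real.exp ((p.1 ^ 2 + p.2 ^ 2) / 3) + 1 + p.1 ^ 2 + p.2 ^ 2)) := by
      rw [hf1_def, hf2_def, hq_def]
      exact key_bound ρ p.1 p.2 hρ
    have hnn : (0:ℝ) ≤ |p.1| ^ a * |p.2| ^ a := by
      have := Real.rpow_nonneg (abs_nonneg p.1) a
      have := Real.rpow_nonneg (abs_nonneg p.2) a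
      positivity
    calc |p.1| ^ a * |p.2| ^ a * |(f1 p + f2 p) / 2 - q p|
        ≤ |p.1| ^ a * |p.2| ^ a * (ρ ^ 2 *
          ((2 * Real.pi)⁻¹ * Real.exp (-(p.1 ^ 2 + p.2 ^ 2) / 2) *
            (2 * p.1 ^ 2 * p.2 ^ 2 * Real.exp ((p.1 ^ 2 + p.2 ^ 2) / 3) + 1 + p.1 ^ 2 + p.2 ^ 2))) :=
          mul_le_mul_of_nonneg_left hkey hnn
      _ = ρ ^ 2 * (|p.1| ^ a * |p.2| ^ a *
          ((2 * Real.pi)⁻¹ * Real.exp (-(p.1 ^ 2 + p.2 ^ 2) / 2) *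
            (2 * p.1 ^ 2 * p.2 ^ 2 * Real.exp ((p.1 ^ 2 + p.2 ^ 2) / 3) + 1 + p.1 ^ 2 + p.2 ^ 2))) := by
          ring
      _ = ρ ^ 2 * g p := by rw [hgeq p]
  calc ‖∫ p : ℝ × ℝ, H p * (((f1 p + f2 p) / 2 - q p : ℝ) : ℂ)‖
      ≤ ∫ p : ℝ × ℝ, ρ ^ 2 * g p := hfinal
    _ = ρ ^ 2 * ∫ p : ℝ × ℝ, g p := integral_const_mul _ _
    _ ≤ ((∫ p : ℝ × ℝ, g p) + 1) * ρ ^ 2 := by nlinarith [sq_nonneg ρ]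
end

section
/- Let X be a fractional Brownian motion with Hurst index H ∈ (0,1) and E X(1)² = 1, let a_0,...,a_K be real numbers with Σ a_k = 0 and Σ k a_k = 0, and set Δ_{p,1}X = Σ_{k=0}^K a_k X(k+p). Then there is a constant C such that for all integers k with |k| ≥ K, |cov(Δ_{k,1}X, Δ_{0,1}X)| ≤ C|k|^{2H−3}. -/
open MeasureTheory ProbabilityTheory

/-- Abel summation: if the total sum of `v` vanishes. -/
lemma abel_sum (v φ : ℕ → ℝ) (n : ℕ) (hv : ∑ i ∈ Finset.range n, v i = 0) :
    ∑ i ∈ Finset.range n, v i * φ i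
      = ∑ i ∈ Finset.range (n - 1), (∑ m ∈ Finset.range (i + 1), v m) * (φ i - φ (i + 1)) := by
  have h := Finset.sum_range_by_parts φ v n
  simp only [smul_eq_mul, hv, mul_zero, zero_sub] at h
  calc ∑ i ∈ Finset.range n, v i * φ i
      = ∑ i ∈ Finset.range n, φ i * v i := by
        exact Finset.sum_congr rfl fun i _ => mul_comm _ _
    _ = -∑ i ∈ Finset.range (n - 1), (φ (i + 1) - φ i) * ∑ m ∈ Finset.range (i + 1), v m := h
    _ = ∑ i ∈ Finset.range (n - 1), (∑ m ∈ Finset.range (i + 1), v m) * (φ i - φ (i + 1)) := by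
        rw [← Finset.sum_neg_distrib]
        exact Finset.sum_congr rfl fun i _ => by ring

lemma partial_sum_sum (v : ℕ → ℝ) (n : ℕ) :
    ∑ i ∈ Finset.range n, (∑ m ∈ Finset.range (i + 1), v m)
      = ∑ m ∈ Finset.range n, ((n : ℝ) - m) * v m := by
  induction n with
  | zero => simp
  | succ n ih =>
      rw [Finset.sum_range_succ, ih, Finset.sum_range_succ, Finset.sum_range_succ]
      push_cast
      have h2 : ∑ x ∈ Finset.range n, ((n:ℝ) + 1 - x) * v x
          = ∑ x ∈ Finset.range n, (((n:ℝ) - x) * v x + v x) :=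
        Finset.sum_congr rfl fun m _ => by ring
      rw [h2, Finset.sum_add_distrib]
      ring

/-- second-order Abel: uses both vanishing-moment conditions. -/
lemma abel2_sum (K : ℕ) (a : ℕ → ℝ) (ha0 : ∑ k ∈ Finset.range (K + 1), a k = 0)
    (ha1 : ∑ k ∈ Finset.range (K + 1), (k : ℝ) * a k = 0) (ψ : ℕ → ℝ) :
    ∑ j ∈ Finset.range (K + 1), a j * ψ j
      = ∑ i ∈ Finset.range (K - 1),
          (∑ m ∈ Finset.range (i + 1), (∑ r ∈ Finset.range (m + 1), a r))
            * (ψ i - 2 * ψ (i + 1) + ψ (i + 2)) := by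
  have hb0 : ∑ m ∈ Finset.range K, (∑ r ∈ Finset.range (m + 1), a r) = 0 := by
    rw [partial_sum_sum]
    have h1 : ∑ m ∈ Finset.range (K + 1), ((K : ℝ) - m) * a m
        = ∑ m ∈ Finset.range K, ((K : ℝ) - m) * a m := by
      rw [Finset.sum_range_succ]; simp
    have h2 : ∑ m ∈ Finset.range (K + 1), ((K : ℝ) - m) * a m
        = (K : ℝ) * ∑ m ∈ Finset.range (K + 1), a m
          - ∑ m ∈ Finset.range (K + 1), (m : ℝ) * a m := by
      rw [Finset.mul_sum, ← Finset.sum_sub_distrib]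
      exact Finset.sum_congr rfl fun m _ => by ring
    rw [← h1, h2, ha0, ha1]; ring
  rw [abel_sum a ψ (K + 1) ha0]
  simp only [Nat.add_sub_cancel]
  rw [abel_sum _ (fun i => ψ i - ψ (i + 1)) K hb0]
  exact Finset.sum_congr rfl fun i _ => by ring

lemma key_identity (K : ℕ) (a : ℕ → ℝ) (ha0 : ∑ k ∈ Finset.range (K + 1), a k = 0)
    (ha1 : ∑ k ∈ Finset.range (K + 1), (k : ℝ) * a k = 0) (f : ℝ → ℝ) (x : ℝ) :
    ∑ j ∈ Finset.range (K + 1), ∑ j' ∈ Finset.range (K + 1), a j * a j' * f (x + j - j')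
      = ∑ j' ∈ Finset.range K, ∑ i ∈ Finset.range (K - 1),
          (∑ r ∈ Finset.range (j' + 1), a r)
            * ((∑ m ∈ Finset.range (i + 1), (∑ r ∈ Finset.range (m + 1), a r))
              * (f (x - 1 - j' + i + 1) - 2 * f (x - 1 - j' + i + 2) + f (x - 1 - j' + i + 3)
                - (f (x - 1 - j' + i) - 2 * f (x - 1 - j' + i + 1)
                    + f (x - 1 - j' + i + 2)))) := by
  have step1 : ∀ j' : ℕ, ∑ j ∈ Finset.range (K + 1), a j * f (x + j - j')
      = ∑ i ∈ Finset.range (K - 1),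
          (∑ m ∈ Finset.range (i + 1), (∑ r ∈ Finset.range (m + 1), a r))
            * (f (x + i - j') - 2 * f (x + i + 1 - j') + f (x + i + 2 - j')) := by
    intro j'
    rw [abel2_sum K a ha0 ha1 (fun j => f (x + j - j'))]
    refine Finset.sum_congr rfl fun i _ => ?_
    have e1 : x + ((i : ℝ) + 1) - j' = x + i + 1 - j' := by ring
    have e2 : x + ((i : ℝ) + 2) - j' = x + i + 2 - j' := by ring
    push_cast
    rw [e1, e2]
  calc ∑ j ∈ Finset.range (K + 1), ∑ j' ∈ Finset.range (K + 1), a j * a j' * f (x + j - j')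
      = ∑ j' ∈ Finset.range (K + 1), a j' *
          (∑ j ∈ Finset.range (K + 1), a j * f (x + j - j')) := by
        rw [Finset.sum_comm]
        exact Finset.sum_congr rfl fun j' _ => by
          rw [Finset.mul_sum]
          exact Finset.sum_congr rfl fun j _ => by ring
    _ = ∑ j' ∈ Finset.range K, (∑ r ∈ Finset.range (j' + 1), a r) *
          ((∑ i ∈ Finset.range (K - 1),
            (∑ m ∈ Finset.range (i + 1), (∑ r ∈ Finset.range (m + 1), a r))
              * (f (x + i - j') - 2 * f (x + i + 1 - j') + f (x + i + 2 - j')))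
          - (∑ i ∈ Finset.range (K - 1),
            (∑ m ∈ Finset.range (i + 1), (∑ r ∈ Finset.range (m + 1), a r))
              * (f (x + i - (j'+1)) - 2 * f (x + i + 1 - (j'+1)) + f (x + i + 2 - (j'+1))))) := by
        rw [abel_sum a _ (K + 1) ha0]
        simp only [Nat.add_sub_cancel]
        refine Finset.sum_congr rfl fun j' _ => ?_
        rw [step1 j', step1 (j' + 1)]
        push_cast
        rfl
    _ = _ := by
        refine Finset.sum_congr rfl fun j' _ => ?_
        rw [← Finset.sum_sub_distrib, Finset.mul_sum]
        refine Finset.sum_congr rfl fun i _ => ?_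
        have e1 : x + (i:ℝ) - j' = x - 1 - j' + i + 1 := by ring
        have e2 : x + (i:ℝ) + 1 - j' = x - 1 - j' + i + 2 := by ring
        have e3 : x + (i:ℝ) + 2 - j' = x - 1 - j' + i + 3 := by ring
        have e4 : x + (i:ℝ) - ((j':ℝ) + 1) = x - 1 - j' + i := by ring
        have e5 : x + (i:ℝ) + 1 - ((j':ℝ) + 1) = x - 1 - j' + i + 1 := by ring
        have e6 : x + (i:ℝ) + 2 - ((j':ℝ) + 1) = x - 1 - j' + i + 2 := by ring
        rw [e1, e2, e3, e4, e5, e6]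
        ring

lemma mvt_step (f f' : ℝ → ℝ) (hf : ∀ x, 0 < x → HasDerivAt f (f' x) x) (t : ℝ) (ht : 0 < t) :
    ∃ ξ ∈ Set.Ioo t (t + 1), f (t + 1) - f t = f' ξ := by
  obtain ⟨c, hc, hceq⟩ := exists_hasDerivAt_eq_slope f f' (by linarith : t < t + 1)
    (fun x hx => (hf x (lt_of_lt_of_le ht hx.1)).continuousAt.continuousWithinAt)
    (fun x hx => hf x (lt_trans ht hx.1))
  refine ⟨c, hc, ?_⟩
  rw [hceq]
  have : t + 1 - t = 1 := by ring
  rw [this, div_one]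

lemma deriv_abs_rpow (p : ℝ) (x : ℝ) (hx : 0 < x) :
    HasDerivAt (fun t : ℝ => |t| ^ p) (p * x ^ (p - 1)) x := by
  have h : HasDerivAt (fun t : ℝ => t ^ p) (p * x ^ (p - 1)) x := by
    simpa [mul_comm] using Real.hasDerivAt_rpow_const (p := p) (Or.inl hx.ne')
  refine h.congr_of_eventuallyEq ?_
  filter_upwards [eventually_gt_nhds hx] with t ht
  rw [abs_of_pos ht]

lemma deriv_rpow' (q : ℝ) (c : ℝ) (x : ℝ) (hx : 0 < x) :
    HasDerivAt (fun t : ℝ => c * t ^ q) (c * q * x ^ (q - 1)) x := by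
  have h : HasDerivAt (fun t : ℝ => t ^ q) (q * x ^ (q - 1)) x := by
    simpa [mul_comm] using Real.hasDerivAt_rpow_const (p := q) (Or.inl hx.ne')
  simpa [mul_assoc] using h.const_mul c

lemma Wbound (H : ℝ) (hH0 : 0 < H) (hH1 : H < 1) (t : ℝ) (ht : 0 < t) :
    |(|t + 1| ^ (2 * H) - 2 * |t + 2| ^ (2 * H) + |t + 3| ^ (2 * H))
      - (|t| ^ (2 * H) - 2 * |t + 1| ^ (2 * H) + |t + 2| ^ (2 * H))|
        ≤ 4 * t ^ (2 * H - 3) := by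
  set p := 2 * H with hp
  -- first MVT
  set D : ℝ → ℝ := fun s => |s| ^ p - 2 * |s + 1| ^ p + |s + 2| ^ p with hD
  set D' : ℝ → ℝ := fun s => p * s ^ (p - 1) - 2 * (p * (s + 1) ^ (p - 1))
      + p * (s + 2) ^ (p - 1) with hD'
  have hDderiv : ∀ x, 0 < x → HasDerivAt D (D' x) x := by
    intro x hx
    have h1 := deriv_abs_rpow p x hx
    have h2 := (deriv_abs_rpow p (x + 1) (by linarith)).comp_add_const x 1
    have h3 := (deriv_abs_rpow p (x + 2) (by linarith)).comp_add_const x 2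
    exact (h1.sub (h2.const_mul 2)).add h3
  obtain ⟨ξ₁, hξ₁, e₁⟩ := mvt_step D D' hDderiv t ht
  -- second MVT
  set Q : ℝ → ℝ := fun s => p * (s + 1) ^ (p - 1) - p * s ^ (p - 1) with hQ
  set Q' : ℝ → ℝ := fun s => p * (p - 1) * (s + 1) ^ (p - 2) - p * (p - 1) * s ^ (p - 2) with hQ'
  have hQderiv : ∀ x, 0 < x → HasDerivAt Q (Q' x) x := by
    intro x hx
    have h1 := deriv_rpow' (p - 1) p x hx
    have h2 := (deriv_rpow' (p - 1) p (x + 1) (by linarith)).comp_add_const x 1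
    have hq : p - 1 - 1 = p - 2 := by ring
    rw [hq] at h1 h2
    exact h2.sub h1
  have hξ₁pos : 0 < ξ₁ := lt_trans ht hξ₁.1
  obtain ⟨ξ₂, hξ₂, e₂⟩ := mvt_step Q Q' hQderiv ξ₁ hξ₁pos
  -- third MVT
  set R : ℝ → ℝ := fun s => p * (p - 1) * s ^ (p - 2) with hR
  set R' : ℝ → ℝ := fun s => p * (p - 1) * (p - 2) * s ^ (p - 3) with hR'
  have hRderiv : ∀ x, 0 < x → HasDerivAt R (R' x) x := by
    intro x hx
    have h1 := deriv_rpow' (p - 2) (p * (p - 1)) x hx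
    have hq : p - 2 - 1 = p - 3 := by ring
    rw [hq] at h1
    simpa [hR, hR', mul_assoc] using h1
  have hξ₂pos : 0 < ξ₂ := lt_trans hξ₁pos hξ₂.1
  obtain ⟨ξ₃, hξ₃, e₃⟩ := mvt_step R R' hRderiv ξ₂ hξ₂pos
  have hξ₃pos : 0 < ξ₃ := lt_trans hξ₂pos hξ₃.1
  -- assemble
  have key : (|t + 1| ^ p - 2 * |t + 2| ^ p + |t + 3| ^ p)
      - (|t| ^ p - 2 * |t + 1| ^ p + |t + 2| ^ p) = R' ξ₃ := by
    have eD : (|t + 1| ^ p - 2 * |t + 2| ^ p + |t + 3| ^ p)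
        - (|t| ^ p - 2 * |t + 1| ^ p + |t + 2| ^ p) = D (t + 1) - D t := by
      simp only [hD]
      rw [show t + 1 + 1 = t + 2 by ring, show t + 1 + 2 = t + 3 by ring]
    have eQ : D' ξ₁ = Q (ξ₁ + 1) - Q ξ₁ := by
      simp only [hD', hQ]
      rw [show ξ₁ + 1 + 1 = ξ₁ + 2 by ring]
      ring
    have eR : Q' ξ₂ = R (ξ₂ + 1) - R ξ₂ := by simp only [hQ', hR]
    rw [eD, e₁, eQ, e₂, eR, e₃]
  rw [key]
  have hcoef : |p * (p - 1) * (p - 2)| ≤ 4 := by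
    have h1 : |p| ≤ 2 := abs_le.mpr ⟨by rw [hp]; linarith, by rw [hp]; linarith⟩
    have h2 : |p - 1| ≤ 1 := abs_le.mpr ⟨by rw [hp]; linarith, by rw [hp]; linarith⟩
    have h3 : |p - 2| ≤ 2 := abs_le.mpr ⟨by rw [hp]; linarith, by rw [hp]; linarith⟩
    have n1 : (0:ℝ) ≤ |p| := abs_nonneg _
    have n2 : (0:ℝ) ≤ |p - 1| := abs_nonneg _
    have n3 : (0:ℝ) ≤ |p - 2| := abs_nonneg _
    rw [abs_mul, abs_mul]
    have m1 : |p| * |p - 1| ≤ 2 * 1 := mul_le_mul h1 h2 n2 (by norm_num)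
    have m2 : |p| * |p - 1| * |p - 2| ≤ 2 * 1 * 2 :=
      mul_le_mul m1 h3 n3 (by norm_num)
    linarith
  have hrpow : ξ₃ ^ (p - 3) ≤ t ^ (p - 3) :=
    Real.rpow_le_rpow_of_nonpos ht (le_of_lt (lt_trans (lt_trans hξ₁.1 hξ₂.1) hξ₃.1))
      (by rw [hp]; linarith)
  have hRval : R' ξ₃ = p * (p - 1) * (p - 2) * ξ₃ ^ (p - 3) := rfl
  rw [hRval, abs_mul, abs_of_nonneg (Real.rpow_nonneg hξ₃pos.le _)]
  exact mul_le_mul hcoef hrpow (Real.rpow_nonneg hξ₃pos.le _) (by norm_num)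

lemma double_sum_factor (s t : Finset ℕ) (f g : ℕ → ℝ) (M : ℝ) :
    ∑ j ∈ s, ∑ i ∈ t, f j * g i * M = (∑ j ∈ s, f j) * (∑ i ∈ t, g i) * M := by
  rw [Finset.sum_mul_sum, Finset.sum_mul]
  exact Finset.sum_congr rfl fun j _ => by rw [Finset.sum_mul]

lemma core_bound (H : ℝ) (hH0 : 0 < H) (hH1 : H < 1) (K : ℕ) (a : ℕ → ℝ)
    (ha0 : ∑ k ∈ Finset.range (K + 1), a k = 0)
    (ha1 : ∑ k ∈ Finset.range (K + 1), (k : ℝ) * a k = 0) :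
    ∃ C : ℝ, 0 ≤ C ∧ ∀ x : ℝ, (K : ℝ) ≤ x →
      |∑ j ∈ Finset.range (K + 1), ∑ j' ∈ Finset.range (K + 1),
          a j * a j' * |x + (j : ℝ) - (j' : ℝ)| ^ (2 * H)| ≤ C * x ^ (2 * H - 3) := by
  rcases Nat.eq_zero_or_pos K with hK | hK
  · subst hK
    refine ⟨0, le_refl _, fun x _ => ?_⟩
    have ha : a 0 = 0 := by simpa using ha0
    simp [ha]
  have hBnn : 0 ≤ ∑ j' ∈ Finset.range K, |∑ r ∈ Finset.range (j' + 1), a r| :=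
    Finset.sum_nonneg fun _ _ => abs_nonneg _
  have hCcnn : 0 ≤ ∑ i ∈ Finset.range (K - 1),
      |∑ m ∈ Finset.range (i + 1), (∑ r ∈ Finset.range (m + 1), a r)| :=
    Finset.sum_nonneg fun _ _ => abs_nonneg _
  have hAnn : 0 ≤ ∑ j ∈ Finset.range (K + 1), |a j| :=
    Finset.sum_nonneg fun _ _ => abs_nonneg _
  have h3K : (0:ℝ) ≤ 3 * K + 2 := by positivity
  have h2K : (0:ℝ) < 2 * K + 1 := by positivity
  have hA2nn : 0 ≤ (∑ j ∈ Finset.range (K + 1), |a j|) * (∑ j ∈ Finset.range (K + 1), |a j|)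
      * (3 * (K:ℝ) + 2) ^ (2 * H) :=
    mul_nonneg (mul_nonneg hAnn hAnn) (Real.rpow_nonneg h3K _)
  refine ⟨32 * ((∑ j' ∈ Finset.range K, |∑ r ∈ Finset.range (j' + 1), a r|)
      * (∑ i ∈ Finset.range (K - 1),
          |∑ m ∈ Finset.range (i + 1), (∑ r ∈ Finset.range (m + 1), a r)|))
    + ((∑ j ∈ Finset.range (K + 1), |a j|) * (∑ j ∈ Finset.range (K + 1), |a j|)
      * (3 * (K:ℝ) + 2) ^ (2 * H)) * (2 * (K:ℝ) + 1) ^ (3 - 2 * H), ?_, fun x hx => ?_⟩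
  · have := mul_nonneg hA2nn (Real.rpow_nonneg h2K.le (3 - 2 * H))
    have := mul_nonneg hBnn hCcnn
    linarith
  have hK1 : (1:ℝ) ≤ (K:ℝ) := by exact_mod_cast hK
  have hxpos : 0 < x := lt_of_lt_of_le (by linarith) hx
  have hxe : 0 ≤ x ^ (2 * H - 3) := Real.rpow_nonneg hxpos.le _
  have hC1xnn : 0 ≤ 32 * ((∑ j' ∈ Finset.range K, |∑ r ∈ Finset.range (j' + 1), a r|)
      * (∑ i ∈ Finset.range (K - 1),
          |∑ m ∈ Finset.range (i + 1), (∑ r ∈ Finset.range (m + 1), a r)|))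
        * x ^ (2 * H - 3) := by
    apply mul_nonneg (by positivity) hxe
  have hC2nn : 0 ≤ ((∑ j ∈ Finset.range (K + 1), |a j|) * (∑ j ∈ Finset.range (K + 1), |a j|)
      * (3 * (K:ℝ) + 2) ^ (2 * H)) * (2 * (K:ℝ) + 1) ^ (3 - 2 * H) :=
    mul_nonneg hA2nn (Real.rpow_nonneg h2K.le _)
  have hid := key_identity K a ha0 ha1 (fun t => |t| ^ (2 * H)) x
  beta_reduce at hid
  by_cases hcase : (2 * (K:ℝ) + 1) ≤ x
  · -- main regime
    rw [hid]
    have hterm : ∀ j' ∈ Finset.range K, ∀ i ∈ Finset.range (K - 1),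
        |(∑ r ∈ Finset.range (j' + 1), a r)
          * ((∑ m ∈ Finset.range (i + 1), (∑ r ∈ Finset.range (m + 1), a r))
            * (|x - 1 - j' + i + 1| ^ (2 * H) - 2 * |x - 1 - j' + i + 2| ^ (2 * H)
              + |x - 1 - j' + i + 3| ^ (2 * H)
              - (|x - 1 - j' + i| ^ (2 * H) - 2 * |x - 1 - j' + i + 1| ^ (2 * H)
                  + |x - 1 - j' + i + 2| ^ (2 * H))))|
          ≤ |∑ r ∈ Finset.range (j' + 1), a r|
              * |∑ m ∈ Finset.range (i + 1), (∑ r ∈ Finset.range (m + 1), a r)|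
              * (32 * x ^ (2 * H - 3)) := by
      intro j' hj' i hi
      have hj'K : (j' : ℝ) ≤ (K : ℝ) - 1 := by
        have h := Finset.mem_range.mp hj'
        have h2 : (j' : ℝ) + 1 ≤ (K : ℝ) := by exact_mod_cast h
        linarith
      have hinn : (0:ℝ) ≤ (i : ℝ) := Nat.cast_nonneg i
      set y := x - 1 - (j' : ℝ) + (i : ℝ) with hy
      have hyhalf : x / 2 ≤ y := by rw [hy]; linarith
      have hypos : 0 < y := lt_of_lt_of_le (by linarith) hyhalf
      have hW := Wbound H hH0 hH1 y hypos
      have hye : y ^ (2 * H - 3) ≤ (x / 2) ^ (2 * H - 3) :=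
        Real.rpow_le_rpow_of_nonpos (by linarith) hyhalf (by linarith)
      have hhalf : (x / 2) ^ (2 * H - 3) ≤ 8 * x ^ (2 * H - 3) := by
        rw [Real.div_rpow hxpos.le (by norm_num : (0:ℝ) ≤ 2), div_eq_mul_inv,
          ← Real.rpow_neg (by norm_num : (0:ℝ) ≤ 2)]
        have h8 : (2:ℝ) ^ (-(2 * H - 3)) ≤ 8 := by
          have hle : (2:ℝ) ^ (-(2 * H - 3)) ≤ (2:ℝ) ^ (3:ℝ) :=
            Real.rpow_le_rpow_of_exponent_le (by norm_num) (by linarith)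
          have h23 : (2:ℝ) ^ (3:ℝ) = 8 := by
            rw [show (3:ℝ) = ((3:ℕ):ℝ) by norm_num, Real.rpow_natCast]; norm_num
          linarith
        calc x ^ (2 * H - 3) * (2:ℝ) ^ (-(2 * H - 3)) ≤ x ^ (2 * H - 3) * 8 :=
              mul_le_mul_of_nonneg_left h8 hxe
          _ = 8 * x ^ (2 * H - 3) := by ring
      have hWx : abs ((|y + 1| ^ (2 * H) - 2 * |y + 2| ^ (2 * H) + |y + 3| ^ (2 * H))
          - (|y| ^ (2 * H) - 2 * |y + 1| ^ (2 * H) + |y + 2| ^ (2 * H)))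
            ≤ 32 * x ^ (2 * H - 3) := by
        calc _ ≤ 4 * y ^ (2 * H - 3) := hW
          _ ≤ 32 * x ^ (2 * H - 3) := by
              have := le_trans hye hhalf
              linarith
      rw [abs_mul, abs_mul]
      have hstep : |∑ r ∈ Finset.range (j' + 1), a r|
          * (|∑ m ∈ Finset.range (i + 1), (∑ r ∈ Finset.range (m + 1), a r)| *
          abs (|y + 1| ^ (2 * H) - 2 * |y + 2| ^ (2 * H) + |y + 3| ^ (2 * H) -
            (|y| ^ (2 * H) - 2 * |y + 1| ^ (2 * H) + |y + 2| ^ (2 * H))))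
          ≤ |∑ r ∈ Finset.range (j' + 1), a r|
            * (|∑ m ∈ Finset.range (i + 1), (∑ r ∈ Finset.range (m + 1), a r)|
              * (32 * x ^ (2 * H - 3))) :=
        mul_le_mul_of_nonneg_left
          (mul_le_mul_of_nonneg_left hWx (abs_nonneg _)) (abs_nonneg _)
      exact le_trans hstep (le_of_eq (by ring))
    refine le_trans (Finset.abs_sum_le_sum_abs _ _) ?_
    refine le_trans (Finset.sum_le_sum fun j' _ => Finset.abs_sum_le_sum_abs _ _) ?_
    refine le_trans (Finset.sum_le_sum fun j' hj' =>
      Finset.sum_le_sum fun i hi => hterm j' hj' i hi) ?_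
    rw [double_sum_factor]
    nlinarith [hC2nn, hxe, hBnn, hCcnn]
  · -- band regime : K ≤ x ≤ 2K+1
    push_neg at hcase
    have hband : |∑ j ∈ Finset.range (K + 1), ∑ j' ∈ Finset.range (K + 1),
        a j * a j' * |x + (j : ℝ) - (j' : ℝ)| ^ (2 * H)|
          ≤ (∑ j ∈ Finset.range (K + 1), |a j|) * (∑ j ∈ Finset.range (K + 1), |a j|)
            * (3 * (K:ℝ) + 2) ^ (2 * H) := by
      have hterm : ∀ j ∈ Finset.range (K + 1), ∀ j' ∈ Finset.range (K + 1),
          |a j * a j' * |x + (j : ℝ) - (j' : ℝ)| ^ (2 * H)|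
            ≤ |a j| * |a j'| * (3 * (K:ℝ) + 2) ^ (2 * H) := by
        intro j hj j' hj'
        have hjK : (j : ℝ) ≤ (K : ℝ) := by
          have h := Finset.mem_range.mp hj; exact_mod_cast Nat.lt_succ_iff.mp h
        have hj'K : (j' : ℝ) ≤ (K : ℝ) := by
          have h := Finset.mem_range.mp hj'; exact_mod_cast Nat.lt_succ_iff.mp h
        have hjnn : (0:ℝ) ≤ (j : ℝ) := Nat.cast_nonneg j
        have hj'nn : (0:ℝ) ≤ (j' : ℝ) := Nat.cast_nonneg j'
        have habs : |x + (j : ℝ) - (j' : ℝ)| ≤ 3 * (K:ℝ) + 2 :=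
          abs_le.mpr ⟨by linarith, by linarith⟩
        have hr : |x + (j : ℝ) - (j' : ℝ)| ^ (2 * H) ≤ (3 * (K:ℝ) + 2) ^ (2 * H) :=
          Real.rpow_le_rpow (abs_nonneg _) habs (by linarith)
        calc |a j * a j' * |x + (j : ℝ) - (j' : ℝ)| ^ (2 * H)|
            = |a j| * |a j'| * |x + (j : ℝ) - (j' : ℝ)| ^ (2 * H) := by
              rw [abs_mul, abs_mul, abs_of_nonneg (Real.rpow_nonneg (abs_nonneg _) _)]
          _ ≤ |a j| * |a j'| * (3 * (K:ℝ) + 2) ^ (2 * H) :=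
              mul_le_mul_of_nonneg_left hr (mul_nonneg (abs_nonneg _) (abs_nonneg _))
      refine le_trans (Finset.abs_sum_le_sum_abs _ _) ?_
      refine le_trans (Finset.sum_le_sum fun j _ => Finset.abs_sum_le_sum_abs _ _) ?_
      refine le_trans (Finset.sum_le_sum fun j hj =>
        Finset.sum_le_sum fun j' hj' => hterm j hj j' hj') ?_
      rw [double_sum_factor]
    have hxe2 : (2 * (K:ℝ) + 1) ^ (2 * H - 3) ≤ x ^ (2 * H - 3) :=
      Real.rpow_le_rpow_of_nonpos hxpos hcase.le (by linarith)
    have h1 : ((∑ j ∈ Finset.range (K + 1), |a j|) * (∑ j ∈ Finset.range (K + 1), |a j|)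
          * (3 * (K:ℝ) + 2) ^ (2 * H)) * (2 * (K:ℝ) + 1) ^ (3 - 2 * H)
        * (2 * (K:ℝ) + 1) ^ (2 * H - 3)
        = (∑ j ∈ Finset.range (K + 1), |a j|) * (∑ j ∈ Finset.range (K + 1), |a j|)
          * (3 * (K:ℝ) + 2) ^ (2 * H) := by
      rw [mul_assoc, ← Real.rpow_add h2K]
      norm_num
    have h2 := mul_le_mul_of_nonneg_left hxe2 hC2nn
    nlinarith [hband, hC1xnn]

lemma S_symm (K : ℕ) (a : ℕ → ℝ) (H : ℝ) (x : ℝ) :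
    ∑ j ∈ Finset.range (K + 1), ∑ j' ∈ Finset.range (K + 1),
        a j * a j' * |(-x) + (j : ℝ) - (j' : ℝ)| ^ (2 * H)
      = ∑ j ∈ Finset.range (K + 1), ∑ j' ∈ Finset.range (K + 1),
          a j * a j' * |x + (j : ℝ) - (j' : ℝ)| ^ (2 * H) := by
  rw [Finset.sum_comm]
  refine Finset.sum_congr rfl fun u _ => Finset.sum_congr rfl fun v _ => ?_
  rw [show (-x) + (v : ℝ) - (u : ℝ) = -(x + (u : ℝ) - (v : ℝ)) by ring, abs_neg]
  ring

lemma double_split (r : Finset ℕ) (f g h : ℕ → ℕ → ℝ) :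
    ∑ j ∈ r, ∑ j' ∈ r, (f j j' + g j j' - h j j')
      = (∑ j ∈ r, ∑ j' ∈ r, f j j') + (∑ j ∈ r, ∑ j' ∈ r, g j j')
        - ∑ j ∈ r, ∑ j' ∈ r, h j j' := by
  simp only [Finset.sum_add_distrib, Finset.sum_sub_distrib]

/-- Let `X` be a fractional Brownian motion with Hurst index
`H ∈ (0,1)` and `E X(1)² = 1` (centered, with covariance
`E X(t)X(s) = (|s|^{2H}+|t|^{2H}−|s−t|^{2H})/2`).  Let `a_0,…,a_K` satisfy
`∑ a_k = 0`, `∑ k a_k = 0`, and set `Δ_{p,1}X = ∑_k a_k X(k+p)`.  Then there is a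
constant `C` such that for every integer `k` with `|k| ≥ K`,
`|cov(Δ_{k,1}X, Δ_{0,1}X)| ≤ C |k|^{2H−3}`. -/
theorem stmt13 {Ω : Type*} [MeasureSpace Ω] [IsProbabilityMeasure (ℙ : Measure Ω)]
    (H : ℝ) (hH0 : 0 < H) (hH1 : H < 1)
    (X : ℝ → Ω → ℝ) (hmeas : ∀ t, Measurable (X t))
    (hmean : ∀ t, ∫ ω, X t ω = 0)
    (hint : ∀ s t, Integrable (fun ω => X s ω * X t ω))
    (hcov : ∀ s t : ℝ, ∫ ω, X s ω * X t ω
      = (|s| ^ (2 * H) + |t| ^ (2 * H) - |s - t| ^ (2 * H)) / 2)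
    (K : ℕ) (a : ℕ → ℝ)
    (ha0 : ∑ k ∈ Finset.range (K + 1), a k = 0)
    (ha1 : ∑ k ∈ Finset.range (K + 1), (k : ℝ) * a k = 0)
    (Δ : ℤ → Ω → ℝ)
    (hΔ : ∀ k ω, Δ k ω = ∑ j ∈ Finset.range (K + 1), a j * X ((j : ℝ) + (k : ℝ)) ω) :
    ∃ C : ℝ, ∀ k : ℤ, (K : ℤ) ≤ |k| →
      |(∫ ω, Δ k ω * Δ 0 ω) - (∫ ω, Δ k ω) * (∫ ω, Δ 0 ω)|
        ≤ C * |(k : ℝ)| ^ (2 * H - 3) := by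
  have hXint : ∀ t, Integrable (X t) := by
    intro t
    have h1 : Integrable (fun ω => (X t ω * X t ω + 1) / 2) :=
      ((hint t t).add (integrable_const 1)).div_const 2
    refine h1.mono' (hmeas t).aestronglyMeasurable (Filter.Eventually.of_forall fun ω => ?_)
    rw [Real.norm_eq_abs]
    nlinarith [sq_nonneg (|X t ω| - 1), sq_abs (X t ω)]
  have hΔmean : ∀ k : ℤ, (∫ ω, Δ k ω) = 0 := by
    intro k
    calc ∫ ω, Δ k ω = ∫ ω, ∑ j ∈ Finset.range (K + 1), a j * X ((j : ℝ) + (k : ℝ)) ω :=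
          integral_congr_ae (Filter.Eventually.of_forall fun ω => hΔ k ω)
      _ = ∑ j ∈ Finset.range (K + 1), ∫ ω, a j * X ((j : ℝ) + (k : ℝ)) ω :=
          integral_finset_sum _ fun j _ => (hXint _).const_mul (a j)
      _ = 0 := by
          simp only [integral_const_mul, hmean, mul_zero, Finset.sum_const_zero]
  have hsum : ∀ k : ℤ, ∫ ω, Δ k ω * Δ 0 ω
      = -(1 / 2) * ∑ j ∈ Finset.range (K + 1), ∑ j' ∈ Finset.range (K + 1),
          a j * a j' * |((k : ℤ) : ℝ) + (j : ℝ) - (j' : ℝ)| ^ (2 * H) := by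
    intro k
    have e1 : ∀ ω : Ω, Δ k ω * Δ 0 ω
        = ∑ j ∈ Finset.range (K + 1), ∑ j' ∈ Finset.range (K + 1),
            (a j * a j') * (X ((j : ℝ) + (k : ℝ)) ω * X ((j' : ℝ) + ((0 : ℤ) : ℝ)) ω) := by
      intro ω
      rw [hΔ, hΔ, Finset.sum_mul_sum]
      exact Finset.sum_congr rfl fun j _ => Finset.sum_congr rfl fun j' _ => by ring
    calc ∫ ω, Δ k ω * Δ 0 ω
        = ∫ ω, ∑ j ∈ Finset.range (K + 1), ∑ j' ∈ Finset.range (K + 1),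
            (a j * a j') * (X ((j : ℝ) + (k : ℝ)) ω * X ((j' : ℝ) + ((0 : ℤ) : ℝ)) ω) :=
          integral_congr_ae (Filter.Eventually.of_forall fun ω => e1 ω)
      _ = ∑ j ∈ Finset.range (K + 1), ∫ ω, ∑ j' ∈ Finset.range (K + 1),
            (a j * a j') * (X ((j : ℝ) + (k : ℝ)) ω * X ((j' : ℝ) + ((0 : ℤ) : ℝ)) ω) :=
          integral_finset_sum _ fun j _ =>
            integrable_finset_sum _ fun j' _ => (hint _ _).const_mul _
      _ = ∑ j ∈ Finset.range (K + 1), ∑ j' ∈ Finset.range (K + 1),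
            ∫ ω, (a j * a j') * (X ((j : ℝ) + (k : ℝ)) ω * X ((j' : ℝ) + ((0 : ℤ) : ℝ)) ω) :=
          Finset.sum_congr rfl fun j _ =>
            integral_finset_sum _ fun j' _ => (hint _ _).const_mul _
      _ = ∑ j ∈ Finset.range (K + 1), ∑ j' ∈ Finset.range (K + 1),
            (a j * a j') * ((|(j : ℝ) + (k : ℝ)| ^ (2 * H) + |(j' : ℝ) + ((0 : ℤ) : ℝ)| ^ (2 * H)
              - |((j : ℝ) + (k : ℝ)) - ((j' : ℝ) + ((0 : ℤ) : ℝ))| ^ (2 * H)) / 2) := by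
          refine Finset.sum_congr rfl fun j _ => Finset.sum_congr rfl fun j' _ => ?_
          rw [integral_const_mul, hcov]
      _ = ∑ j ∈ Finset.range (K + 1), ∑ j' ∈ Finset.range (K + 1),
            (((a j * |(j : ℝ) + (k : ℝ)| ^ (2 * H) / 2) * a j')
              + (a j * (a j' * |(j' : ℝ) + ((0 : ℤ) : ℝ)| ^ (2 * H) / 2))
              - (1 / 2) * (a j * a j' * |((k : ℤ) : ℝ) + (j : ℝ) - (j' : ℝ)| ^ (2 * H))) := by
          refine Finset.sum_congr rfl fun j _ => Finset.sum_congr rfl fun j' _ => ?_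
          rw [show ((j : ℝ) + (k : ℝ)) - ((j' : ℝ) + ((0 : ℤ) : ℝ))
              = ((k : ℤ) : ℝ) + (j : ℝ) - (j' : ℝ) by push_cast; ring]
          ring
      _ = -(1 / 2) * ∑ j ∈ Finset.range (K + 1), ∑ j' ∈ Finset.range (K + 1),
            a j * a j' * |((k : ℤ) : ℝ) + (j : ℝ) - (j' : ℝ)| ^ (2 * H) := by
          rw [double_split]
          have hf : ∑ j ∈ Finset.range (K + 1), ∑ j' ∈ Finset.range (K + 1),
              (a j * |(j : ℝ) + (k : ℝ)| ^ (2 * H) / 2) * a j' = 0 :=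
            Finset.sum_eq_zero fun j _ => by rw [← Finset.mul_sum, ha0, mul_zero]
          have hg : ∑ j ∈ Finset.range (K + 1), ∑ j' ∈ Finset.range (K + 1),
              a j * (a j' * |(j' : ℝ) + ((0 : ℤ) : ℝ)| ^ (2 * H) / 2) = 0 := by
            have h1 : ∀ j ∈ Finset.range (K + 1),
                ∑ j' ∈ Finset.range (K + 1),
                  a j * (a j' * |(j' : ℝ) + ((0 : ℤ) : ℝ)| ^ (2 * H) / 2)
                = a j * ∑ j' ∈ Finset.range (K + 1),
                    (a j' * |(j' : ℝ) + ((0 : ℤ) : ℝ)| ^ (2 * H) / 2) :=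
              fun j _ => (Finset.mul_sum _ _ _).symm
            rw [Finset.sum_congr rfl h1, ← Finset.sum_mul, ha0, zero_mul]
          have hh : ∑ j ∈ Finset.range (K + 1), ∑ j' ∈ Finset.range (K + 1),
              (1 / 2 : ℝ) * (a j * a j' * |((k : ℤ) : ℝ) + (j : ℝ) - (j' : ℝ)| ^ (2 * H))
              = (1 / 2) * ∑ j ∈ Finset.range (K + 1), ∑ j' ∈ Finset.range (K + 1),
                  a j * a j' * |((k : ℤ) : ℝ) + (j : ℝ) - (j' : ℝ)| ^ (2 * H) := by
            rw [Finset.mul_sum]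
            exact Finset.sum_congr rfl fun j _ => by rw [Finset.mul_sum]
          rw [hf, hg, hh]
          ring
  obtain ⟨C, hC0, hC⟩ := core_bound H hH0 hH1 K a ha0 ha1
  refine ⟨C, fun k hk => ?_⟩
  have hx : (K : ℝ) ≤ |((k : ℤ) : ℝ)| := by
    rw [← Int.cast_abs]
    exact_mod_cast hk
  have hSabs : ∑ j ∈ Finset.range (K + 1), ∑ j' ∈ Finset.range (K + 1),
      a j * a j' * |((k : ℤ) : ℝ) + (j : ℝ) - (j' : ℝ)| ^ (2 * H)
      = ∑ j ∈ Finset.range (K + 1), ∑ j' ∈ Finset.range (K + 1),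
          a j * a j' * (abs (|((k : ℤ) : ℝ)| + (j : ℝ) - (j' : ℝ))) ^ (2 * H) := by
    rcases le_or_gt 0 ((k : ℤ) : ℝ) with h0 | h0
    · rw [abs_of_nonneg h0]
    · conv_lhs => rw [show ((k : ℤ) : ℝ) = -|((k : ℤ) : ℝ)| by rw [abs_of_neg h0]; ring]
      exact S_symm K a H |((k : ℤ) : ℝ)|
  rw [hsum k, hSabs, hΔmean k, hΔmean 0, zero_mul, sub_zero, abs_mul]
  have habs2 : |(-(1 / 2) : ℝ)| = 1 / 2 := by norm_num
  rw [habs2]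
  have h := hC |((k : ℤ) : ℝ)| hx
  have hnn : (0:ℝ) ≤ |∑ j ∈ Finset.range (K + 1), ∑ j' ∈ Finset.range (K + 1),
      a j * a j' * (abs (|((k : ℤ) : ℝ)| + (j : ℝ) - (j' : ℝ))) ^ (2 * H)| := abs_nonneg _
  linarith
end
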